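/- arXiv:1903.03991 — 4 statements merged into one kernel-verified Lean document; each statement's English description precedes it below -/
import Mathlib

section
/- For every QDDC formula D over a finite set PV of propositional variables, the language L(D) = { σ ∈ (2^PV)^+ : σ,[0,|σ|−1] ⊨ D } is a regular language over the alphabet 2^PV, i.e., there exists a deterministic finite automaton over alphabet 2^PV whose accepted language is exactly L(D). -/
/-- Propositional formulas over a set `PV` of propositional variables. -/
inductive PropForm (PV : Type) : Type where
  | fls : PropForm PV
  | tru : PropForm PV
  | var : PV → PropForm PV
  | not : PropForm PV → PropForm PV
  | and : PropForm PV → PropForm PV → PropForm PV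
  | or : PropForm PV → PropForm PV → PropForm PV

/-- Evaluation of a propositional formula at a letter (a valuation of `PV`). -/
def PropForm.eval {PV : Type} (v : PV → Bool) : PropForm PV → Bool
  | .fls => false
  | .tru => true
  | .var p => v p
  | .not φ => !(φ.eval v)
  | .and φ ψ => φ.eval v && ψ.eval v
  | .or φ ψ => φ.eval v || ψ.eval v

/-- Comparison operators ⋈ ∈ {<, ≤, =, ≥, >}. -/
inductive Cmp : Type where
  | lt | le | eq | ge | gt

def Cmp.eval : Cmp → ℕ → ℕ → Prop
  | .lt, m, c => m < c
  | .le, m, c => m ≤ c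
  | .eq, m, c => m = c
  | .ge, m, c => m ≥ c
  | .gt, m, c => m > c

/-- Syntax of QDDC formulas over propositional variables `PV`. -/
inductive QDDC (PV : Type) : Type where
  | pt : PropForm PV → QDDC PV                      -- ⟨φ⟩
  | unit : PropForm PV → QDDC PV                    -- [φ]
  | dunit : PropForm PV → QDDC PV                   -- [[φ]]
  | chop : QDDC PV → QDDC PV → QDDC PV              -- D₁ ^ D₂
  | not : QDDC PV → QDDC PV                         -- !D
  | or : QDDC PV → QDDC PV → QDDC PV                -- D₁ || D₂
  | and : QDDC PV → QDDC PV → QDDC PV               -- D₁ && D₂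
  | ex : PV → QDDC PV → QDDC PV                     -- ex p. D
  | all : PV → QDDC PV → QDDC PV                    -- all p. D
  | slen : Cmp → ℕ → QDDC PV                        -- slen ⋈ c
  | scount : PropForm PV → Cmp → ℕ → QDDC PV        -- scount φ ⋈ c
  | sdur : PropForm PV → Cmp → ℕ → QDDC PV          -- sdur φ ⋈ c

/-- `σ'` is a `p`-variant of `σ`: same length, agrees with `σ` on all variables except
possibly `p`. -/
def PVariant {PV : Type} (p : PV) (σ σ' : List (PV → Bool)) : Prop :=
  σ'.length = σ.length ∧
    ∀ i < σ.length, ∀ q, q ≠ p → (σ'.getD i default) q = (σ.getD i default) q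

/-- Satisfaction `σ, [b, e] ⊨ D` of a QDDC formula over the interval `[b, e]`
of the word `σ`. -/
def QDDC.sat {PV : Type} : List (PV → Bool) → ℕ → ℕ → QDDC PV → Prop
  | σ, b, e, .pt φ => b = e ∧ φ.eval (σ.getD b default) = true
  | σ, b, e, .unit φ => b < e ∧ ∀ i, b ≤ i → i < e → φ.eval (σ.getD i default) = true
  | σ, b, e, .dunit φ => ∀ i, b ≤ i → i ≤ e → φ.eval (σ.getD i default) = true
  | σ, b, e, .chop D₁ D₂ => ∃ m, b ≤ m ∧ m ≤ e ∧ QDDC.sat σ b m D₁ ∧ QDDC.sat σ m e D₂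
  | σ, b, e, .not D => ¬ QDDC.sat σ b e D
  | σ, b, e, .or D₁ D₂ => QDDC.sat σ b e D₁ ∨ QDDC.sat σ b e D₂
  | σ, b, e, .and D₁ D₂ => QDDC.sat σ b e D₁ ∧ QDDC.sat σ b e D₂
  | σ, b, e, .ex p D => ∃ σ', PVariant p σ σ' ∧ QDDC.sat σ' b e D
  | σ, b, e, .all p D => ∀ σ', PVariant p σ σ' → QDDC.sat σ' b e D
  | _, b, e, .slen c n => c.eval (e - b) n
  | σ, b, e, .scount φ c n =>
      c.eval ((Finset.Icc b e).filter (fun i => φ.eval (σ.getD i default) = true)).card n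
  | σ, b, e, .sdur φ c n =>
      c.eval ((Finset.Ico b e).filter (fun i => φ.eval (σ.getD i default) = true)).card n

/-- The language of a QDDC formula: all nonempty words `σ` over the alphabet `2^PV`
such that `σ, [0, |σ| - 1] ⊨ D`. -/
def QDDC.lang {PV : Type} (D : QDDC PV) : Language (PV → Bool) :=
  {σ : List (PV → Bool) | σ ≠ [] ∧ QDDC.sat σ 0 (σ.length - 1) D}

open List

namespace QDDCAux

variable {α : Type}

/-- Left quotient of a language. -/
def Lq (L : Language α) (u : List α) : Language α := {w | u ++ w ∈ L}

theorem mem_Lq {L : Language α} {u w : List α} : w ∈ Lq L u ↔ u ++ w ∈ L := Iff.rfl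

theorem mem_lang_setOf {P : List α → Prop} {x : List α} :
    x ∈ ({σ | P σ} : Language α) ↔ P x := Iff.rfl

theorem Lq_append_singleton {L : Language α} {u : List α} {a : α} :
    Lq L (u ++ [a]) = {w | a :: w ∈ Lq L u} := by
  ext w
  show (u ++ [a]) ++ w ∈ L ↔ a :: w ∈ Lq L u
  rw [List.append_assoc]
  rfl

theorem isRegular_of_nerode (L : Language α) (h : (Set.range (Lq L)).Finite) :
    L.IsRegular := by
  classical
  let Q := ↥(Set.range (Lq L))
  let M : DFA α Q :=
    { step := fun s a => ⟨{w | a :: w ∈ s.val}, by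
        obtain ⟨u, hu⟩ := s.2
        exact ⟨u ++ [a], by rw [Lq_append_singleton, hu]⟩⟩
      start := ⟨Lq L [], ⟨[], rfl⟩⟩
      accept := {s | [] ∈ s.val} }
  have hstep : ∀ (s : Q) (a : α), (M.step s a).val = {w | a :: w ∈ s.val} := fun _ _ => rfl
  have key : ∀ (x : List α) (s : Q) (u : List α), s.val = Lq L u →
      (M.evalFrom s x).val = Lq L (u ++ x) := by
    intro x
    induction x with
    | nil => intro s u h; simpa using h
    | cons a x ih =>
      intro s u h
      show (M.evalFrom (M.step s a) x).val = _
      rw [ih _ (u ++ [a]) (by rw [hstep, h, Lq_append_singleton])]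
      simp
  refine ⟨Q, h.fintype, M, ?_⟩
  ext x
  rw [DFA.mem_accepts]
  show [] ∈ (M.evalFrom M.start x).val ↔ x ∈ L
  rw [key x M.start [] rfl]
  show [] ++ x ++ [] ∈ L ↔ x ∈ L
  simp

theorem nerode_of_factor {T : Type} (L : Language α) (f : List α → T) (g : T → Language α)
    (hf : (Set.range f).Finite) (h : ∀ u, Lq L u = g (f u)) :
    (Set.range (Lq L)).Finite := by
  have : Set.range (Lq L) = g '' (Set.range f) := by
    have : Lq L = g ∘ f := funext h
    rw [this, Set.range_comp]
  rw [this]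
  exact hf.image g

theorem nerode_of_factor' {T : Type} [Finite T] (L : Language α) (f : List α → T)
    (g : T → Language α) (h : ∀ u, Lq L u = g (f u)) :
    (Set.range (Lq L)).Finite :=
  nerode_of_factor L f g (Set.toFinite _) h

end QDDCAux

namespace QDDCAux
variable {α : Type} [Inhabited α]

theorem getD_take' {l : List α} {n i : ℕ} (h : i < n) (d : α) :
    (l.take n).getD i d = l.getD i d := by
  simp [List.getD_eq_getElem?_getD, List.getElem?_take, h]

theorem getD_drop' (l : List α) (m i : ℕ) (d : α) :
    (l.drop m).getD i d = l.getD (m + i) d := by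
  simp [List.getD_eq_getElem?_getD, List.getElem?_drop]

theorem filter_Icc_shift (Q : ℕ → Prop) [DecidablePred Q] (b e : ℕ) :
    (Finset.Icc (b + 1) (e + 1)).filter Q
      = ((Finset.Icc b e).filter fun i => Q (i + 1)).image (· + 1) := by
  ext a
  simp only [Finset.mem_filter, Finset.mem_image, Finset.mem_Icc]
  constructor
  · rintro ⟨⟨h1, h2⟩, hq⟩
    refine ⟨a - 1, ⟨⟨by omega, by omega⟩, ?_⟩, by omega⟩
    have : a - 1 + 1 = a := by omega
    rw [this]; exact hq
  · rintro ⟨i, ⟨⟨h1, h2⟩, hq⟩, rfl⟩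
    exact ⟨⟨by omega, by omega⟩, hq⟩

theorem card_filter_shift (Q : ℕ → Prop) [DecidablePred Q] (b e : ℕ) :
    ((Finset.Icc (b + 1) (e + 1)).filter Q).card
      = ((Finset.Icc b e).filter fun i => Q (i + 1)).card := by
  rw [filter_Icc_shift]
  exact Finset.card_image_of_injective _ (add_left_injective 1)

theorem filter_Ico_shift (Q : ℕ → Prop) [DecidablePred Q] (b e : ℕ) :
    (Finset.Ico (b + 1) (e + 1)).filter Q
      = ((Finset.Ico b e).filter fun i => Q (i + 1)).image (· + 1) := by
  ext a
  simp only [Finset.mem_filter, Finset.mem_image, Finset.mem_Ico]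
  constructor
  · rintro ⟨⟨h1, h2⟩, hq⟩
    refine ⟨a - 1, ⟨⟨by omega, by omega⟩, ?_⟩, by omega⟩
    have : a - 1 + 1 = a := by omega
    rw [this]; exact hq
  · rintro ⟨i, ⟨⟨h1, h2⟩, hq⟩, rfl⟩
    exact ⟨⟨by omega, by omega⟩, hq⟩

theorem card_filter_shift_Ico (Q : ℕ → Prop) [DecidablePred Q] (b e : ℕ) :
    ((Finset.Ico (b + 1) (e + 1)).filter Q).card
      = ((Finset.Ico b e).filter fun i => Q (i + 1)).card := by
  rw [filter_Ico_shift]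
  exact Finset.card_image_of_injective _ (add_left_injective 1)

/-- bridge between Finset filter-count over positions and `List.countP`. -/
theorem card_range_filter_getD (p : α → Bool) (σ : List α) :
    ((Finset.range σ.length).filter fun i => p (σ.getD i default) = true).card
      = σ.countP p := by
  induction σ using List.reverseRecOn with
  | nil => simp
  | append_singleton σ a ih =>
    rw [List.length_append, List.length_singleton, Finset.range_add_one]
    rw [Finset.filter_insert]
    have hcong : ((Finset.range σ.length).filter
        fun i => p ((σ ++ [a]).getD i default) = true)
        = (Finset.range σ.length).filter fun i => p (σ.getD i default) = true := by
      apply Finset.filter_congr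
      intro i hi
      rw [List.getD_append _ _ _ _ (Finset.mem_range.mp hi)]
    rw [List.countP_append]
    have ha : (σ ++ [a]).getD σ.length default = a := by
      rw [List.getD_append_right _ _ _ _ (le_refl _)]
      simp
    rw [ha]
    by_cases hp : p a = true
    · rw [if_pos hp, Finset.card_insert_of_notMem (by simp), hcong, ih]
      simp [List.countP_cons, hp]
    · rw [if_neg hp, hcong, ih]
      simp [List.countP_cons, hp]

theorem icc_card_countP (p : α → Bool) {σ : List α} (h : σ ≠ []) :
    ((Finset.Icc 0 (σ.length - 1)).filter fun i => p (σ.getD i default) = true).card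
      = σ.countP p := by
  have hl : 1 ≤ σ.length := List.length_pos_iff.mpr h
  have : Finset.Icc 0 (σ.length - 1) = Finset.range σ.length := by
    rw [Finset.range_eq_Ico, ← Finset.Ico_add_one_right_eq_Icc]
    congr 1
    omega
  rw [this, card_range_filter_getD]

theorem ico_card_countP (p : α → Bool) (σ : List α) :
    ((Finset.Ico 0 (σ.length - 1)).filter fun i => p (σ.getD i default) = true).card
      = σ.dropLast.countP p := by
  have : Finset.Ico 0 (σ.length - 1) = Finset.range σ.dropLast.length := by
    rw [Finset.range_eq_Ico, List.length_dropLast]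
  rw [this, ← card_range_filter_getD p σ.dropLast]
  congr 1
  apply Finset.filter_congr
  intro i hi
  rw [Finset.mem_range, List.length_dropLast] at hi
  rw [List.dropLast_eq_take, getD_take' (by omega)]

/-- getD-based characterization of `all`. -/
theorem forall_getD_iff (p : α → Bool) (σ : List α) :
    (∀ i < σ.length, p (σ.getD i default) = true) ↔ σ.all p = true := by
  rw [List.all_eq_true]
  constructor
  · intro h a ha
    obtain ⟨i, hi, rfl⟩ := List.mem_iff_getElem.mp ha
    have := h i hi
    rwa [List.getD_eq_getElem _ _ hi] at this
  · intro h i hi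
    rw [List.getD_eq_getElem _ _ hi]
    exact h _ (List.getElem_mem _)

end QDDCAux

namespace QDDCAux
variable {PV : Type}

theorem pvariant_iff {p : PV} {σ τ : List (PV → Bool)} :
    PVariant p σ τ ↔ τ.length = σ.length ∧
      ∀ i, ∀ q, q ≠ p → (τ.getD i default) q = (σ.getD i default) q := by
  constructor
  · rintro ⟨hlen, h⟩
    refine ⟨hlen, fun i q hq => ?_⟩
    by_cases hi : i < σ.length
    · exact h i hi q hq
    · rw [List.getD_eq_default _ _ (by omega), List.getD_eq_default _ _ (by omega)]
  · rintro ⟨hlen, h⟩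
    exact ⟨hlen, fun i _ q hq => h i q hq⟩

theorem pvariant_refl (p : PV) (σ : List (PV → Bool)) : PVariant p σ σ :=
  ⟨rfl, fun _ _ _ _ => rfl⟩

theorem pvariant_nil {p : PV} {τ : List (PV → Bool)} : PVariant p [] τ ↔ τ = [] := by
  constructor
  · rintro ⟨hlen, -⟩; exact List.length_eq_zero_iff.mp hlen
  · rintro rfl; exact pvariant_refl p []

theorem pvariant_cons {p : PV} {a c : PV → Bool} {σ τ : List (PV → Bool)} :
    PVariant p (a :: σ) (c :: τ) ↔
      (∀ q, q ≠ p → c q = a q) ∧ PVariant p σ τ := by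
  rw [pvariant_iff, pvariant_iff]
  constructor
  · rintro ⟨hlen, h⟩
    refine ⟨fun q hq => by simpa using h 0 q hq, by simpa using hlen, fun i q hq => ?_⟩
    simpa using h (i + 1) q hq
  · rintro ⟨h0, hlen, h⟩
    refine ⟨by simpa using hlen, fun i q hq => ?_⟩
    cases i with
    | zero => simpa using h0 q hq
    | succ i => simpa using h i q hq

theorem pvariant_cons_elim {p : PV} {a : PV → Bool} {σ τ' : List (PV → Bool)}
    (h : PVariant p (a :: σ) τ') :
    ∃ c τ, τ' = c :: τ ∧ (∀ q, q ≠ p → c q = a q) ∧ PVariant p σ τ := by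
  have hlen := h.1
  cases τ' with
  | nil => simp at hlen
  | cons c τ => exact ⟨c, τ, rfl, pvariant_cons.mp h⟩

theorem pvariant_append {p : PV} {u w τ : List (PV → Bool)} :
    PVariant p (u ++ w) τ ↔
      ∃ τu τw, PVariant p u τu ∧ PVariant p w τw ∧ τ = τu ++ τw := by
  constructor
  · intro h
    rw [pvariant_iff] at h
    obtain ⟨hlen, hag⟩ := h
    rw [List.length_append] at hlen
    refine ⟨τ.take u.length, τ.drop u.length, ?_, ?_, (List.take_append_drop _ _).symm⟩
    · rw [pvariant_iff]
      refine ⟨by rw [List.length_take]; omega, fun i q hq => ?_⟩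
      by_cases hi : i < u.length
      · rw [getD_take' hi]
        have := hag i q hq
        rwa [List.getD_append _ _ _ _ hi] at this
      · rw [List.getD_eq_default _ _ (by rw [List.length_take]; omega),
          List.getD_eq_default _ _ (by omega)]
    · rw [pvariant_iff]
      refine ⟨by rw [List.length_drop]; omega, fun i q hq => ?_⟩
      rw [getD_drop']
      have := hag (u.length + i) q hq
      rwa [List.getD_append_right _ _ _ _ (by omega),
        Nat.add_sub_cancel_left] at this
  · rintro ⟨τu, τw, hu, hw, rfl⟩
    rw [pvariant_iff] at hu hw ⊢
    obtain ⟨hlu, hau⟩ := hu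
    obtain ⟨hlw, haw⟩ := hw
    refine ⟨by simp [hlu, hlw], fun i q hq => ?_⟩
    by_cases hi : i < u.length
    · rw [List.getD_append _ _ _ _ (by omega), List.getD_append _ _ _ _ hi]
      exact hau i q hq
    · rw [List.getD_append_right _ _ _ _ (by omega),
        List.getD_append_right _ _ _ _ (by omega), hlu]
      exact haw _ q hq

end QDDCAux
namespace QDDCAux
variable {PV : Type}

theorem sat_cons (D : QDDC PV) :
    ∀ (a : PV → Bool) (σ : List (PV → Bool)) (b e : ℕ),
      QDDC.sat (a :: σ) (b + 1) (e + 1) D ↔ QDDC.sat σ b e D := by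
  induction D with
  | pt φ =>
    intro a σ b e
    simp [QDDC.sat, List.getD_cons_succ]
  | unit φ =>
    intro a σ b e
    simp only [QDDC.sat]
    constructor
    · rintro ⟨h1, h2⟩
      refine ⟨by omega, fun i hb he => ?_⟩
      have := h2 (i + 1) (by omega) (by omega)
      simpa [List.getD_cons_succ] using this
    · rintro ⟨h1, h2⟩
      refine ⟨by omega, fun i hb he => ?_⟩
      obtain ⟨j, rfl⟩ : ∃ j, i = j + 1 := ⟨i - 1, by omega⟩
      rw [List.getD_cons_succ]
      exact h2 j (by omega) (by omega)
  | dunit φ =>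
    intro a σ b e
    simp only [QDDC.sat]
    constructor
    · intro h i hb he
      have := h (i + 1) (by omega) (by omega)
      simpa [List.getD_cons_succ] using this
    · intro h i hb he
      obtain ⟨j, rfl⟩ : ∃ j, i = j + 1 := ⟨i - 1, by omega⟩
      rw [List.getD_cons_succ]
      exact h j (by omega) (by omega)
  | chop D₁ D₂ ih₁ ih₂ =>
    intro a σ b e
    simp only [QDDC.sat]
    constructor
    · rintro ⟨m, hbm, hme, h1, h2⟩
      obtain ⟨k, rfl⟩ : ∃ k, m = k + 1 := ⟨m - 1, by omega⟩
      exact ⟨k, by omega, by omega, (ih₁ a σ b k).mp h1, (ih₂ a σ k e).mp h2⟩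
    · rintro ⟨m, hbm, hme, h1, h2⟩
      exact ⟨m + 1, by omega, by omega, (ih₁ a σ b m).mpr h1, (ih₂ a σ m e).mpr h2⟩
  | not D ih =>
    intro a σ b e
    simp only [QDDC.sat, ih]
  | or D₁ D₂ ih₁ ih₂ =>
    intro a σ b e
    simp only [QDDC.sat, ih₁, ih₂]
  | and D₁ D₂ ih₁ ih₂ =>
    intro a σ b e
    simp only [QDDC.sat, ih₁, ih₂]
  | ex p D ih =>
    intro a σ b e
    simp only [QDDC.sat]
    constructor
    · rintro ⟨τ', hvar, hsat⟩
      obtain ⟨c, τ, rfl, -, hv⟩ := pvariant_cons_elim hvar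
      exact ⟨τ, hv, (ih c τ b e).mp hsat⟩
    · rintro ⟨τ, hv, hsat⟩
      exact ⟨a :: τ, pvariant_cons.mpr ⟨fun _ _ => rfl, hv⟩, (ih a τ b e).mpr hsat⟩
  | all p D ih =>
    intro a σ b e
    simp only [QDDC.sat]
    constructor
    · intro h τ hv
      have := h (a :: τ) (pvariant_cons.mpr ⟨fun _ _ => rfl, hv⟩)
      exact (ih a τ b e).mp this
    · intro h τ' hvar
      obtain ⟨c, τ, rfl, -, hv⟩ := pvariant_cons_elim hvar
      exact (ih c τ b e).mpr (h τ hv)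
  | slen c n =>
    intro a σ b e
    simp only [QDDC.sat]
    have : e + 1 - (b + 1) = e - b := by omega
    rw [this]
  | scount φ c n =>
    intro a σ b e
    simp only [QDDC.sat]
    rw [card_filter_shift]
    simp only [List.getD_cons_succ]
  | sdur φ c n =>
    intro a σ b e
    simp only [QDDC.sat]
    rw [card_filter_shift_Ico]
    simp only [List.getD_cons_succ]

theorem sat_append_shift (D : QDDC PV) (u σ : List (PV → Bool)) (b e : ℕ) :
    QDDC.sat (u ++ σ) (u.length + b) (u.length + e) D ↔ QDDC.sat σ b e D := by
  induction u with
  | nil => simp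
  | cons a u ih =>
    have h1 : (a :: u).length + b = (u.length + b) + 1 := by simp; omega
    have h2 : (a :: u).length + e = (u.length + e) + 1 := by simp; omega
    rw [h1, h2]
    show QDDC.sat (a :: (u ++ σ)) _ _ D ↔ _
    rw [sat_cons D a (u ++ σ) (u.length + b) (u.length + e)]
    exact ih

end QDDCAux

namespace QDDCAux
variable {PV : Type}

theorem variant_transfer {p : PV} {σ σ' τ : List (PV → Bool)} {e : ℕ}
    (hσ : e < σ.length) (hσ' : e < σ'.length)
    (hag : ∀ i ≤ e, σ.getD i default = σ'.getD i default)
    (hτ : PVariant p σ τ) :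
    PVariant p σ' (τ.take (e + 1) ++ σ'.drop (e + 1)) ∧
      (∀ i ≤ e, (τ.take (e + 1) ++ σ'.drop (e + 1)).getD i default = τ.getD i default) ∧
      (τ.take (e + 1) ++ σ'.drop (e + 1)).length = σ'.length := by
  have hτlen : τ.length = σ.length := hτ.1
  have htake : (τ.take (e + 1)).length = e + 1 := by
    rw [List.length_take]; omega
  have hlen : (τ.take (e + 1) ++ σ'.drop (e + 1)).length = σ'.length := by
    rw [List.length_append, htake, List.length_drop]; omega
  have hag2 : ∀ i ≤ e, (τ.take (e + 1) ++ σ'.drop (e + 1)).getD i default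
      = τ.getD i default := by
    intro i hi
    rw [List.getD_append _ _ _ _ (by omega), getD_take' (by omega)]
  refine ⟨?_, hag2, hlen⟩
  rw [pvariant_iff]
  refine ⟨hlen, fun i q hq => ?_⟩
  by_cases hi : i ≤ e
  · rw [hag2 i hi]
    have h1 := (pvariant_iff.mp hτ).2 i q hq
    rw [h1, hag i hi]
  · have hle : (τ.take (e + 1)).length ≤ i := by rw [htake]; omega
    rw [List.getD_append_right _ _ _ _ hle, htake, getD_drop']
    have heq : e + 1 + (i - (e + 1)) = i := by omega
    rw [heq]

theorem sat_ext (D : QDDC PV) :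
    ∀ (σ σ' : List (PV → Bool)) (b e : ℕ), e < σ.length → e < σ'.length →
      (∀ i ≤ e, σ.getD i default = σ'.getD i default) →
      (QDDC.sat σ b e D ↔ QDDC.sat σ' b e D) := by
  induction D with
  | pt φ =>
    intro σ σ' b e hσ hσ' hag
    simp only [QDDC.sat]
    constructor
    · rintro ⟨heq, h2⟩
      subst heq
      exact ⟨rfl, by rwa [← hag b (le_refl b)]⟩
    · rintro ⟨heq, h2⟩
      subst heq
      exact ⟨rfl, by rwa [hag b (le_refl b)]⟩
  | unit φ =>
    intro σ σ' b e hσ hσ' hag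
    simp only [QDDC.sat]
    constructor
    · rintro ⟨h1, h2⟩
      exact ⟨h1, fun i hb he => by rw [← hag i (by omega)]; exact h2 i hb he⟩
    · rintro ⟨h1, h2⟩
      exact ⟨h1, fun i hb he => by rw [hag i (by omega)]; exact h2 i hb he⟩
  | dunit φ =>
    intro σ σ' b e hσ hσ' hag
    simp only [QDDC.sat]
    constructor
    · intro h i hb he
      rw [← hag i he]; exact h i hb he
    · intro h i hb he
      rw [hag i he]; exact h i hb he
  | chop D₁ D₂ ih₁ ih₂ =>
    intro σ σ' b e hσ hσ' hag
    simp only [QDDC.sat]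
    constructor
    · rintro ⟨m, hbm, hme, h1, h2⟩
      exact ⟨m, hbm, hme,
        (ih₁ σ σ' b m (by omega) (by omega) (fun i hi => hag i (by omega))).mp h1,
        (ih₂ σ σ' m e hσ hσ' hag).mp h2⟩
    · rintro ⟨m, hbm, hme, h1, h2⟩
      exact ⟨m, hbm, hme,
        (ih₁ σ σ' b m (by omega) (by omega) (fun i hi => hag i (by omega))).mpr h1,
        (ih₂ σ σ' m e hσ hσ' hag).mpr h2⟩
  | not D ih =>
    intro σ σ' b e hσ hσ' hag
    simp only [QDDC.sat, ih σ σ' b e hσ hσ' hag]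
  | or D₁ D₂ ih₁ ih₂ =>
    intro σ σ' b e hσ hσ' hag
    simp only [QDDC.sat, ih₁ σ σ' b e hσ hσ' hag, ih₂ σ σ' b e hσ hσ' hag]
  | and D₁ D₂ ih₁ ih₂ =>
    intro σ σ' b e hσ hσ' hag
    simp only [QDDC.sat, ih₁ σ σ' b e hσ hσ' hag, ih₂ σ σ' b e hσ hσ' hag]
  | ex p D ih =>
    intro σ σ' b e hσ hσ' hag
    have hag' : ∀ i ≤ e, σ'.getD i default = σ.getD i default :=
      fun i hi => (hag i hi).symm
    simp only [QDDC.sat]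
    constructor
    · rintro ⟨τ, hv, hs⟩
      obtain ⟨hv', hagτ, hlτ⟩ := variant_transfer hσ hσ' hag hv
      refine ⟨_, hv', ?_⟩
      exact (ih τ _ b e (by rw [hv.1]; omega) (by rw [hlτ]; omega)
        (fun i hi => (hagτ i hi).symm)).mp hs
    · rintro ⟨τ, hv, hs⟩
      obtain ⟨hv', hagτ, hlτ⟩ := variant_transfer hσ' hσ hag' hv
      refine ⟨_, hv', ?_⟩
      exact (ih τ _ b e (by rw [hv.1]; omega) (by rw [hlτ]; omega)
        (fun i hi => (hagτ i hi).symm)).mp hs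
  | all p D ih =>
    intro σ σ' b e hσ hσ' hag
    have hag' : ∀ i ≤ e, σ'.getD i default = σ.getD i default :=
      fun i hi => (hag i hi).symm
    simp only [QDDC.sat]
    constructor
    · intro h τ' hv'
      obtain ⟨hv, hagτ, hlτ⟩ := variant_transfer hσ' hσ hag' hv'
      have hs := h _ hv
      exact (ih _ τ' b e (by rw [hlτ]; omega) (by rw [hv'.1]; omega)
        (fun i hi => hagτ i hi)).mp hs
    · intro h τ hv
      obtain ⟨hv', hagτ, hlτ⟩ := variant_transfer hσ hσ' hag hv
      have hs := h _ hv'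
      exact (ih _ τ b e (by rw [hlτ]; omega) (by rw [hv.1]; omega)
        (fun i hi => hagτ i hi)).mp hs
  | slen c n =>
    intro σ σ' b e hσ hσ' hag
    simp only [QDDC.sat]
  | scount φ c n =>
    intro σ σ' b e hσ hσ' hag
    simp only [QDDC.sat]
    have : (Finset.Icc b e).filter (fun i => φ.eval (σ.getD i default) = true)
        = (Finset.Icc b e).filter (fun i => φ.eval (σ'.getD i default) = true) := by
      apply Finset.filter_congr
      intro i hi
      rw [hag i (Finset.mem_Icc.mp hi).2]
    rw [this]
  | sdur φ c n =>
    intro σ σ' b e hσ hσ' hag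
    simp only [QDDC.sat]
    have : (Finset.Ico b e).filter (fun i => φ.eval (σ.getD i default) = true)
        = (Finset.Ico b e).filter (fun i => φ.eval (σ'.getD i default) = true) := by
      apply Finset.filter_congr
      intro i hi
      rw [hag i (le_of_lt (Finset.mem_Ico.mp hi).2)]
    rw [this]

end QDDCAux

namespace QDDCAux
variable {PV : Type}

theorem mem_lang_iff {D : QDDC PV} {σ : List (PV → Bool)} :
    σ ∈ QDDC.lang D ↔ σ ≠ [] ∧ QDDC.sat σ 0 (σ.length - 1) D := Iff.rfl

theorem sat_take_mem {D : QDDC PV} {σ : List (PV → Bool)} {m : ℕ} (hm : m < σ.length) :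
    QDDC.sat σ 0 m D ↔ σ.take (m + 1) ∈ QDDC.lang D := by
  have hlt : (σ.take (m + 1)).length = m + 1 := by rw [List.length_take]; omega
  rw [mem_lang_iff]
  have hne : σ.take (m + 1) ≠ [] := by
    rw [← List.length_pos_iff, hlt]; omega
  have hlm : (σ.take (m + 1)).length - 1 = m := by omega
  rw [hlm]
  have hext := sat_ext D σ (σ.take (m + 1)) 0 m hm (by omega)
    (fun i hi => (getD_take' (by omega) _).symm)
  rw [hext]
  simp [hne]

theorem sat_drop_mem {D : QDDC PV} {σ : List (PV → Bool)} {m : ℕ} (hm : m < σ.length) :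
    QDDC.sat σ m (σ.length - 1) D ↔ σ.drop m ∈ QDDC.lang D := by
  have hld : (σ.drop m).length = σ.length - m := List.length_drop
  have hne : σ.drop m ≠ [] := by rw [← List.length_pos_iff, hld]; omega
  rw [mem_lang_iff]
  have h := sat_append_shift D (σ.take m) (σ.drop m) 0 ((σ.drop m).length - 1)
  rw [List.take_append_drop] at h
  have hlt : (σ.take m).length = m := by rw [List.length_take]; omega
  rw [hlt] at h
  have h1 : m + 0 = m := by omega
  have h2 : m + ((σ.drop m).length - 1) = σ.length - 1 := by rw [hld]; omega
  rw [h1, h2] at h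
  rw [← h]
  simp [hne]

theorem lang_pt (φ : PropForm PV) :
    QDDC.lang (QDDC.pt φ) = {σ | σ.length = 1 ∧ φ.eval (σ.getD 0 default) = true} := by
  ext σ
  rw [mem_lang_iff]
  show _ ↔ σ.length = 1 ∧ _
  simp only [QDDC.sat]
  constructor
  · rintro ⟨hne, h0, hev⟩
    have := List.length_pos_iff.mpr hne
    exact ⟨by omega, hev⟩
  · rintro ⟨h1, hev⟩
    exact ⟨by rw [← List.length_pos_iff]; omega, by omega, hev⟩

theorem all_getD_lt_iff (p : (PV → Bool) → Bool) (σ : List (PV → Bool)) (n : ℕ) (hn : n ≤ σ.length) :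
    (∀ i < n, p (σ.getD i default) = true) ↔ (σ.take n).all p = true := by
  rw [← forall_getD_iff]
  have hl : (σ.take n).length = n := by rw [List.length_take]; omega
  rw [hl]
  constructor
  · intro h i hi
    rw [getD_take' hi]
    exact h i hi
  · intro h i hi
    rw [← getD_take' hi (default : PV → Bool)]
    exact h i hi

theorem lang_unit (φ : PropForm PV) :
    QDDC.lang (QDDC.unit φ) =
      {σ | 2 ≤ σ.length ∧ σ.dropLast.all (fun a => φ.eval a) = true} := by
  ext σ
  rw [mem_lang_iff]
  show _ ↔ 2 ≤ σ.length ∧ _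
  simp only [QDDC.sat]
  rw [List.dropLast_eq_take]
  constructor
  · rintro ⟨hne, h1, h2⟩
    have := List.length_pos_iff.mpr hne
    refine ⟨by omega, ?_⟩
    rw [← all_getD_lt_iff (fun a => φ.eval a) σ (σ.length - 1) (by omega)]
    intro i hi
    exact h2 i (by omega) hi
  · rintro ⟨h1, h2⟩
    rw [← all_getD_lt_iff (fun a => φ.eval a) σ (σ.length - 1) (by omega)] at h2
    exact ⟨by rw [← List.length_pos_iff]; omega, by omega, fun i _ hi => h2 i hi⟩

theorem lang_dunit (φ : PropForm PV) :
    QDDC.lang (QDDC.dunit φ) = {σ | σ ≠ [] ∧ σ.all (fun a => φ.eval a) = true} := by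
  ext σ
  rw [mem_lang_iff]
  show _ ↔ σ ≠ [] ∧ _
  simp only [QDDC.sat]
  constructor
  · rintro ⟨hne, h⟩
    have := List.length_pos_iff.mpr hne
    refine ⟨hne, ?_⟩
    rw [← forall_getD_iff]
    intro i hi
    exact h i (by omega) (by omega)
  · rintro ⟨hne, h⟩
    have := List.length_pos_iff.mpr hne
    rw [← forall_getD_iff] at h
    exact ⟨hne, fun i _ hi => h i (by omega)⟩

theorem lang_slen (c : Cmp) (k : ℕ) :
    QDDC.lang (QDDC.slen (PV := PV) c k) = {σ : List (PV → Bool) | σ ≠ [] ∧ c.eval (σ.length - 1) k} := by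
  ext σ
  rw [mem_lang_iff]
  show _ ↔ σ ≠ [] ∧ _
  simp only [QDDC.sat, Nat.sub_zero]

theorem lang_scount (φ : PropForm PV) (c : Cmp) (k : ℕ) :
    QDDC.lang (QDDC.scount φ c k)
      = {σ | σ ≠ [] ∧ c.eval (σ.countP (fun a => φ.eval a)) k} := by
  ext σ
  rw [mem_lang_iff]
  show _ ↔ σ ≠ [] ∧ _
  simp only [QDDC.sat]
  constructor
  · rintro ⟨hne, h⟩
    rw [icc_card_countP (fun a => φ.eval a) hne] at h
    exact ⟨hne, h⟩
  · rintro ⟨hne, h⟩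
    rw [← icc_card_countP (fun a => φ.eval a) hne] at h
    exact ⟨hne, h⟩

theorem lang_sdur (φ : PropForm PV) (c : Cmp) (k : ℕ) :
    QDDC.lang (QDDC.sdur φ c k)
      = {σ | σ ≠ [] ∧ c.eval (σ.dropLast.countP (fun a => φ.eval a)) k} := by
  ext σ
  rw [mem_lang_iff]
  show _ ↔ σ ≠ [] ∧ _
  simp only [QDDC.sat]
  rw [ico_card_countP (fun a => φ.eval a) σ]

theorem cmp_eval_cap (c : Cmp) (k a a' t : ℕ) (h : min a (k + 1) = min a' (k + 1)) :
    c.eval (a + t) k ↔ c.eval (a' + t) k := by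
  cases c <;> simp only [Cmp.eval] <;> omega

theorem cmp_eval_cap2 (c : Cmp) (k a a' t : ℕ) (h : min a (k + 2) = min a' (k + 2)) :
    c.eval (a + t - 1) k ↔ c.eval (a' + t - 1) k := by
  cases c <;> simp only [Cmp.eval] <;> omega

end QDDCAux

namespace QDDCAux
variable {PV : Type}

theorem append_ne_nil_iff' {u w : List (PV → Bool)} :
    u ++ w ≠ [] ↔ ¬(u.isEmpty = true ∧ w = []) := by
  simp [List.isEmpty_iff]

theorem nerode_lang (D : QDDC PV) : (Set.range (Lq (QDDC.lang D))).Finite := by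
  induction D with
  | pt φ =>
    apply nerode_of_factor _
      (f := fun u : List (PV → Bool) => (min u.length 2, φ.eval (u.getD 0 default)))
      (g := fun t => {w | (t.1 = 0 ∧ w.length = 1 ∧ φ.eval (w.getD 0 default) = true)
        ∨ (t.1 = 1 ∧ w = [] ∧ t.2 = true)})
    · apply Set.Finite.subset ((Set.finite_Iic (2 : ℕ)).prod (Set.finite_univ (α := Bool)))
      rintro _ ⟨u, rfl⟩
      exact ⟨by simp [Set.mem_Iic], trivial⟩
    · intro u
      ext w
      rw [mem_Lq, lang_pt]
      erw [mem_lang_setOf, mem_lang_setOf]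
      simp only [List.length_append]
      constructor
      · rintro ⟨hl, hev⟩
        rcases (by omega : u.length = 0 ∧ w.length = 1 ∨ u.length = 1 ∧ w.length = 0) with
          ⟨h0, h1⟩ | ⟨h0, h1⟩
        · obtain rfl : u = [] := List.length_eq_zero_iff.mp h0
          exact Or.inl ⟨by simp, h1, by simpa using hev⟩
        · obtain rfl : w = [] := List.length_eq_zero_iff.mp h1
          refine Or.inr ⟨by omega, by trivial, ?_⟩
          rwa [List.getD_append _ _ _ _ (by omega)] at hev
      · rintro (⟨h0, h1, hev⟩ | ⟨h1, rfl, hev⟩)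
        · obtain rfl : u = [] := List.length_eq_zero_iff.mp (by omega)
          exact ⟨by simpa using h1, by simpa using hev⟩
        · refine ⟨by simp; omega, ?_⟩
          rwa [List.getD_append _ _ _ _ (by omega)]
  | unit φ =>
    apply nerode_of_factor _
      (f := fun u : List (PV → Bool) => (min u.length 2, u.all (fun a => φ.eval a),
        u.dropLast.all (fun a => φ.eval a)))
      (g := fun t => {w | (w = [] ∧ t.1 = 2 ∧ t.2.2 = true)
        ∨ (w ≠ [] ∧ 2 ≤ t.1 + w.length ∧ t.2.1 = true
            ∧ w.dropLast.all (fun a => φ.eval a) = true)})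
    · apply Set.Finite.subset
        ((Set.finite_Iic (2 : ℕ)).prod (Set.finite_univ (α := Bool × Bool)))
      rintro _ ⟨u, rfl⟩
      exact ⟨by simp [Set.mem_Iic], trivial⟩
    · intro u
      ext w
      rw [mem_Lq, lang_unit]
      erw [mem_lang_setOf, mem_lang_setOf]
      simp only [List.length_append]
      rcases eq_or_ne w [] with rfl | hw
      · simp only [List.append_nil, List.length_nil, Nat.add_zero]
        constructor
        · rintro ⟨h1, h2⟩
          exact Or.inl ⟨by trivial, by omega, h2⟩
        · rintro (⟨-, h1, h2⟩ | ⟨h, -⟩)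
          · exact ⟨by omega, h2⟩
          · exact absurd rfl h
      · have hd : (u ++ w).dropLast = u ++ w.dropLast := by
          rw [List.dropLast_append]
          simp [List.isEmpty_iff, hw]
        rw [hd, List.all_append]
        constructor
        · rintro ⟨h1, h2⟩
          rw [Bool.and_eq_true] at h2
          exact Or.inr ⟨hw, by omega, h2.1, h2.2⟩
        · rintro (⟨rfl, -⟩ | ⟨-, h1, h2, h3⟩)
          · exact absurd rfl hw
          · exact ⟨by omega, by rw [Bool.and_eq_true]; exact ⟨h2, h3⟩⟩
  | dunit φ =>
    apply nerode_of_factor' _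
      (f := fun u => (u.isEmpty, u.all (fun a => φ.eval a)))
      (g := fun t => {w | ¬(t.1 = true ∧ w = []) ∧ t.2 = true
        ∧ w.all (fun a => φ.eval a) = true})
    intro u
    ext w
    rw [mem_Lq, lang_dunit]
    show u ++ w ≠ [] ∧ _ ↔ ¬(u.isEmpty = true ∧ w = []) ∧ _ ∧ _
    rw [List.all_append, Bool.and_eq_true, append_ne_nil_iff']
  | chop D₁ D₂ ih₁ ih₂ =>
    have key : ∀ u w : List (PV → Bool),
        w ∈ Lq (QDDC.lang (QDDC.chop D₁ D₂)) u ↔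
          ((∃ m < u.length, u.take (m + 1) ∈ QDDC.lang D₁
              ∧ w ∈ Lq (QDDC.lang D₂) (u.drop m)) ∨
            (∃ k < w.length, w.take (k + 1) ∈ Lq (QDDC.lang D₁) u
              ∧ w.drop k ∈ QDDC.lang D₂)) := by
      intro u w
      rw [mem_Lq, mem_lang_iff]
      simp only [QDDC.sat]
      have hlapp : (u ++ w).length = u.length + w.length := List.length_append
      constructor
      · rintro ⟨hne, m, -, hme, h1, h2⟩
        have hn : 0 < (u ++ w).length := List.length_pos_iff.mpr hne
        have hmn : m < (u ++ w).length := by omega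
        have h1' := (sat_take_mem hmn).mp h1
        have h2' := (sat_drop_mem hmn).mp h2
        by_cases hc : m < u.length
        · left
          refine ⟨m, hc, ?_, ?_⟩
          · rwa [List.take_append_of_le_length (by omega)] at h1'
          · rw [mem_Lq]
            rwa [List.drop_append_of_le_length (by omega)] at h2'
        · right
          refine ⟨m - u.length, by omega, ?_, ?_⟩
          · rw [mem_Lq]
            rw [List.take_append, List.take_of_length_le (by omega)] at h1'
            have e1 : m + 1 - u.length = m - u.length + 1 := by omega
            rwa [e1] at h1'
          · rw [List.drop_append, List.drop_eq_nil_of_le (by omega)] at h2'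
            simpa using h2'
      · rintro (⟨m, hm, h1, h2⟩ | ⟨k, hk, h1, h2⟩)
        · have hne : u ++ w ≠ [] := by rw [← List.length_pos_iff, hlapp]; omega
          have hmn : m < (u ++ w).length := by omega
          refine ⟨hne, m, by omega, by omega, ?_, ?_⟩
          · rw [sat_take_mem hmn, List.take_append_of_le_length (by omega)]
            exact h1
          · rw [sat_drop_mem hmn, List.drop_append_of_le_length (by omega)]
            exact h2
        · have hne : u ++ w ≠ [] := by rw [← List.length_pos_iff, hlapp]; omega
          have hmn : u.length + k < (u ++ w).length := by omega
          refine ⟨hne, u.length + k, by omega, by omega, ?_, ?_⟩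
          · rw [sat_take_mem hmn, List.take_append,
              List.take_of_length_le (by omega)]
            have e1 : u.length + k + 1 - u.length = k + 1 := by omega
            rw [e1]
            exact h1
          · rw [sat_drop_mem hmn, List.drop_append,
              List.drop_eq_nil_of_le (by omega)]
            have e2 : u.length + k - u.length = k := by omega
            rw [e2]
            simpa using h2
    apply nerode_of_factor _
      (f := fun u => (Lq (QDDC.lang D₁) u,
        (fun m => Lq (QDDC.lang D₂) (u.drop m)) ''
          {m | m < u.length ∧ u.take (m + 1) ∈ QDDC.lang D₁}))
      (g := fun t => {w | (∃ P ∈ t.2, w ∈ P)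
        ∨ ∃ k < w.length, w.take (k + 1) ∈ t.1 ∧ w.drop k ∈ QDDC.lang D₂})
    · apply Set.Finite.subset (ih₁.prod ih₂.finite_subsets)
      rintro _ ⟨u, rfl⟩
      refine ⟨⟨u, rfl⟩, ?_⟩
      rintro _ ⟨m, -, rfl⟩
      exact ⟨u.drop m, rfl⟩
    · intro u
      ext w
      rw [key]
      constructor
      · rintro (⟨m, hm, h1, h2⟩ | h)
        · exact Or.inl ⟨Lq (QDDC.lang D₂) (u.drop m), ⟨m, ⟨hm, h1⟩, rfl⟩, h2⟩
        · exact Or.inr h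
      · rintro (⟨P, ⟨m, ⟨hm, h1⟩, rfl⟩, h2⟩ | h)
        · exact Or.inl ⟨m, hm, h1, h2⟩
        · exact Or.inr h
  | not D ih =>
    apply nerode_of_factor _
      (f := fun u => (Lq (QDDC.lang D) u, u.isEmpty))
      (g := fun t => {w | ¬(t.2 = true ∧ w = []) ∧ w ∉ t.1})
    · apply Set.Finite.subset (ih.prod (Set.finite_univ (α := Bool)))
      rintro _ ⟨u, rfl⟩
      exact ⟨⟨u, rfl⟩, trivial⟩
    · intro u
      ext w
      rw [mem_Lq, mem_lang_iff]
      simp only [QDDC.sat]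
      show _ ↔ ¬(u.isEmpty = true ∧ w = []) ∧ w ∉ Lq (QDDC.lang D) u
      rw [← append_ne_nil_iff']
      constructor
      · rintro ⟨hne, hns⟩
        exact ⟨hne, fun hw => hns (mem_lang_iff.mp (mem_Lq.mp hw)).2⟩
      · rintro ⟨hne, hnm⟩
        exact ⟨hne, fun hs => hnm (mem_Lq.mpr (mem_lang_iff.mpr ⟨hne, hs⟩))⟩
  | or D₁ D₂ ih₁ ih₂ =>
    have hl : QDDC.lang (QDDC.or D₁ D₂) = {σ | σ ∈ QDDC.lang D₁ ∨ σ ∈ QDDC.lang D₂} := by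
      ext σ
      rw [mem_lang_iff]
      show _ ↔ σ ∈ QDDC.lang D₁ ∨ σ ∈ QDDC.lang D₂
      rw [mem_lang_iff, mem_lang_iff]
      simp only [QDDC.sat]
      tauto
    apply nerode_of_factor _
      (f := fun u => (Lq (QDDC.lang D₁) u, Lq (QDDC.lang D₂) u))
      (g := fun t => {w | w ∈ t.1 ∨ w ∈ t.2})
    · apply Set.Finite.subset (ih₁.prod ih₂)
      rintro _ ⟨u, rfl⟩
      exact ⟨⟨u, rfl⟩, ⟨u, rfl⟩⟩
    · intro u
      rw [hl]
      rfl
  | and D₁ D₂ ih₁ ih₂ =>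
    have hl : QDDC.lang (QDDC.and D₁ D₂) = {σ | σ ∈ QDDC.lang D₁ ∧ σ ∈ QDDC.lang D₂} := by
      ext σ
      rw [mem_lang_iff]
      show _ ↔ σ ∈ QDDC.lang D₁ ∧ σ ∈ QDDC.lang D₂
      rw [mem_lang_iff, mem_lang_iff]
      simp only [QDDC.sat]
      tauto
    apply nerode_of_factor _
      (f := fun u => (Lq (QDDC.lang D₁) u, Lq (QDDC.lang D₂) u))
      (g := fun t => {w | w ∈ t.1 ∧ w ∈ t.2})
    · apply Set.Finite.subset (ih₁.prod ih₂)
      rintro _ ⟨u, rfl⟩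
      exact ⟨⟨u, rfl⟩, ⟨u, rfl⟩⟩
    · intro u
      rw [hl]
      rfl
  | ex p D ih =>
    have key : ∀ u w : List (PV → Bool),
        w ∈ Lq (QDDC.lang (QDDC.ex p D)) u ↔
          ∃ τu, PVariant p u τu ∧ ∃ τw, PVariant p w τw ∧ τu ++ τw ∈ QDDC.lang D := by
      intro u w
      rw [mem_Lq, mem_lang_iff]
      simp only [QDDC.sat]
      constructor
      · rintro ⟨hne, τ, hv, hs⟩
        have hlen := hv.1
        obtain ⟨τu, τw, hu, hw, rfl⟩ := pvariant_append.mp hv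
        refine ⟨τu, hu, τw, hw, mem_lang_iff.mpr ⟨?_, ?_⟩⟩
        · rw [← List.length_pos_iff, hlen, List.length_pos_iff]; exact hne
        · rw [hlen]; exact hs
      · rintro ⟨τu, hu, τw, hw, hm⟩
        obtain ⟨hτne, hs⟩ := mem_lang_iff.mp hm
        have hv : PVariant p (u ++ w) (τu ++ τw) :=
          pvariant_append.mpr ⟨τu, τw, hu, hw, rfl⟩
        have hlen := hv.1
        refine ⟨?_, τu ++ τw, hv, ?_⟩
        · rw [← List.length_pos_iff, ← hlen, List.length_pos_iff]; exact hτne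
        · rw [← hlen]; exact hs
    apply nerode_of_factor _
      (f := fun u => Lq (QDDC.lang D) '' {τ | PVariant p u τ})
      (g := fun S => {w | ∃ P ∈ S, ∃ τw, PVariant p w τw ∧ τw ∈ P})
    · apply Set.Finite.subset ih.finite_subsets
      rintro _ ⟨u, rfl⟩ _ ⟨τ, -, rfl⟩
      exact ⟨τ, rfl⟩
    · intro u
      ext w
      rw [key]
      constructor
      · rintro ⟨τu, hu, τw, hw, hm⟩
        exact ⟨Lq (QDDC.lang D) τu, ⟨τu, hu, rfl⟩, τw, hw, hm⟩
      · rintro ⟨P, ⟨τu, hu, rfl⟩, τw, hw, hm⟩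
        exact ⟨τu, hu, τw, hw, hm⟩
  | all p D ih =>
    have key : ∀ u w : List (PV → Bool),
        w ∈ Lq (QDDC.lang (QDDC.all p D)) u ↔
          ∀ τu, PVariant p u τu → ∀ τw, PVariant p w τw → τu ++ τw ∈ QDDC.lang D := by
      intro u w
      rw [mem_Lq, mem_lang_iff]
      simp only [QDDC.sat]
      constructor
      · rintro ⟨hne, hall⟩ τu hu τw hw
        have hv : PVariant p (u ++ w) (τu ++ τw) :=
          pvariant_append.mpr ⟨τu, τw, hu, hw, rfl⟩
        have hs := hall _ hv
        have hlen := hv.1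
        refine mem_lang_iff.mpr ⟨?_, ?_⟩
        · rw [← List.length_pos_iff, hlen, List.length_pos_iff]; exact hne
        · rw [hlen]; exact hs
      · intro h
        have hm := h u (pvariant_refl p u) w (pvariant_refl p w)
        rw [mem_lang_iff] at hm
        refine ⟨hm.1, ?_⟩
        intro τ hv
        have hlen := hv.1
        obtain ⟨τu, τw, hu, hw, rfl⟩ := pvariant_append.mp hv
        have hm2 := mem_lang_iff.mp (h τu hu τw hw)
        rw [← hlen]
        exact hm2.2
    apply nerode_of_factor _
      (f := fun u => Lq (QDDC.lang D) '' {τ | PVariant p u τ})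
      (g := fun S => {w | ∀ P ∈ S, ∀ τw, PVariant p w τw → τw ∈ P})
    · apply Set.Finite.subset ih.finite_subsets
      rintro _ ⟨u, rfl⟩ _ ⟨τ, -, rfl⟩
      exact ⟨τ, rfl⟩
    · intro u
      ext w
      rw [key]
      constructor
      · rintro h P ⟨τu, hu, rfl⟩ τw hw
        exact h τu hu τw hw
      · intro h τu hu τw hw
        exact h (Lq (QDDC.lang D) τu) ⟨τu, hu, rfl⟩ τw hw
  | slen c k =>
    apply nerode_of_factor _
      (f := fun u : List (PV → Bool) => min u.length (k + 2))
      (g := fun m => {w | 1 ≤ m + w.length ∧ c.eval (m + w.length - 1) k})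
    · apply Set.Finite.subset (Set.finite_Iic (k + 2))
      rintro _ ⟨u, rfl⟩
      simp [Set.mem_Iic]
    · intro u
      ext w
      rw [mem_Lq, lang_slen]
      erw [mem_lang_setOf, mem_lang_setOf]
      have hlen : (u ++ w).length = u.length + w.length := List.length_append
      have hne : u ++ w ≠ [] ↔ 1 ≤ u.length + w.length := by
        rw [← List.length_pos_iff, hlen]
        omega
      rw [hne, hlen]
      constructor
      · rintro ⟨h1, hev⟩
        exact ⟨by omega,
          (cmp_eval_cap2 c k u.length (min u.length (k + 2)) w.length (by omega)).mp hev⟩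
      · rintro ⟨h1, hev⟩
        exact ⟨by omega,
          (cmp_eval_cap2 c k u.length (min u.length (k + 2)) w.length (by omega)).mpr hev⟩
  | scount φ c k =>
    apply nerode_of_factor _
      (f := fun u : List (PV → Bool) =>
        (min (u.countP (fun a => φ.eval a)) (k + 1), u.isEmpty))
      (g := fun t => {w | ¬(t.2 = true ∧ w = [])
        ∧ c.eval (t.1 + w.countP (fun a => φ.eval a)) k})
    · apply Set.Finite.subset ((Set.finite_Iic (k + 1)).prod (Set.finite_univ (α := Bool)))
      rintro _ ⟨u, rfl⟩
      exact ⟨by simp [Set.mem_Iic], trivial⟩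
    · intro u
      ext w
      rw [mem_Lq, lang_scount]
      erw [mem_lang_setOf, mem_lang_setOf]
      rw [append_ne_nil_iff', List.countP_append]
      constructor
      · rintro ⟨hne, hev⟩
        exact ⟨hne, (cmp_eval_cap c k (u.countP (fun a => φ.eval a))
          (min (u.countP (fun a => φ.eval a)) (k + 1)) _ (by omega)).mp hev⟩
      · rintro ⟨hne, hev⟩
        exact ⟨hne, (cmp_eval_cap c k (u.countP (fun a => φ.eval a))
          (min (u.countP (fun a => φ.eval a)) (k + 1)) _ (by omega)).mpr hev⟩
  | sdur φ c k =>
    apply nerode_of_factor _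
      (f := fun u : List (PV → Bool) =>
        (min (u.countP (fun a => φ.eval a)) (k + 1),
         min (u.dropLast.countP (fun a => φ.eval a)) (k + 1), u.isEmpty))
      (g := fun t => {w | (w = [] ∧ ¬(t.2.2 = true) ∧ c.eval (t.2.1 + 0) k)
        ∨ (w ≠ [] ∧ c.eval (t.1 + w.dropLast.countP (fun a => φ.eval a)) k)})
    · apply Set.Finite.subset ((Set.finite_Iic (k + 1)).prod
        ((Set.finite_Iic (k + 1)).prod (Set.finite_univ (α := Bool))))
      rintro _ ⟨u, rfl⟩
      exact ⟨by simp [Set.mem_Iic], by simp [Set.mem_Iic], trivial⟩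
    · intro u
      ext w
      rw [mem_Lq, lang_sdur]
      erw [mem_lang_setOf, mem_lang_setOf]
      rcases eq_or_ne w [] with rfl | hw
      · rw [List.append_nil]
        constructor
        · rintro ⟨hne, hev⟩
          refine Or.inl ⟨by trivial, by simpa [List.isEmpty_iff] using hne, ?_⟩
          exact (cmp_eval_cap c k (u.dropLast.countP (fun a => φ.eval a))
            (min (u.dropLast.countP (fun a => φ.eval a)) (k + 1)) 0 (by omega)).mp hev
        · rintro (⟨-, hne, hev⟩ | ⟨h, -⟩)
          · refine ⟨by simpa [List.isEmpty_iff] using hne, ?_⟩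
            exact (cmp_eval_cap c k (u.dropLast.countP (fun a => φ.eval a))
              (min (u.dropLast.countP (fun a => φ.eval a)) (k + 1)) 0 (by omega)).mpr hev
          · exact absurd rfl h
      · have hne : u ++ w ≠ [] := by
          rw [← List.length_pos_iff, List.length_append]
          have := List.length_pos_iff.mpr hw
          omega
        have hd : (u ++ w).dropLast = u ++ w.dropLast := by
          rw [List.dropLast_append]
          simp [List.isEmpty_iff, hw]
        rw [hd, List.countP_append]
        constructor
        · rintro ⟨-, hev⟩
          exact Or.inr ⟨hw, (cmp_eval_cap c k (u.countP (fun a => φ.eval a))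
            (min (u.countP (fun a => φ.eval a)) (k + 1)) _ (by omega)).mp hev⟩
        · rintro (⟨rfl, -⟩ | ⟨-, hev⟩)
          · exact absurd rfl hw
          · exact ⟨hne, (cmp_eval_cap c k (u.countP (fun a => φ.eval a))
              (min (u.countP (fun a => φ.eval a)) (k + 1)) _ (by omega)).mpr hev⟩
end QDDCAux

/-- For every QDDC formula `D` over a finite set `PV` of propositional
variables, the language `L(D)` is regular over the alphabet `2^PV`, i.e. it is accepted
by a deterministic finite automaton. -/
theorem qddc_lang_isRegular {PV : Type} [Fintype PV] [DecidableEq PV] (D : QDDC PV) :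
    (QDDC.lang D).IsRegular := by
  exact QDDCAux.isRegular_of_nerode _ (QDDCAux.nerode_lang D)
end

section
/- Let A = (Q, Σ, s0, δ, F) be a total DFA over Σ = 2^I × 2^O with winning set G. If s0 ∉ G, then there exists no supervisor S over (I, O) with L(S) ⊆ L(A); i.e., the specification 'invariantly satisfy A' is unrealizable. -/
/-- A letter of the alphabet `Σ = 2^I × 2^O`: a valuation of the input variables
together with a valuation of the output variables. -/
abbrev Letter (I O : Type) : Type := (I → Bool) × (O → Bool)

/-- An output-nondeterministic Mealy machine over input variables `I` and output
variables `O`: a total deterministic finite automaton over `Σ = 2^I × 2^O` with a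
distinguished reject state which is the unique non-final state and is a sink, and
whose initial state is final. -/
structure Mealy (I O Q : Type) where
  step : Q → Letter I O → Q
  start : Q
  reject : Q
  start_ne_reject : start ≠ reject
  reject_sink : ∀ a, step reject a = reject

namespace Mealy

variable {I O Q : Type}

/-- The extended transition function. -/
def evalFrom (M : Mealy I O Q) (q : Q) (w : List (Letter I O)) : Q :=
  w.foldl M.step q

/-- The language accepted by a Mealy machine: since the reject state is the unique
non-final state and is a sink, a word is accepted iff its run never reaches the
reject state. -/
def lang (M : Mealy I O Q) : Set (List (Letter I O)) :=
  {w | M.evalFrom M.start w ≠ M.reject}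

/-- A Mealy machine is non-blocking if from every final state and every input there
is an output leading to a final state.  A supervisor is a non-blocking
output-nondeterministic Mealy machine. -/
def NonBlocking (M : Mealy I O Q) : Prop :=
  ∀ q, q ≠ M.reject → ∀ i : I → Bool, ∃ o : O → Bool, M.step q (i, o) ≠ M.reject

/-- A Mealy machine is deterministic if from every final state and every input at
most one output avoids the reject state.  A controller is a deterministic
supervisor. -/
def Deterministic (M : Mealy I O Q) : Prop :=
  ∀ q, q ≠ M.reject → ∀ i : I → Bool, ∀ o₁ o₂ : O → Bool,
    M.step q (i, o₁) ≠ M.reject → M.step q (i, o₂) ≠ M.reject → o₁ = o₂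

end Mealy

/-- if `G` is the winning set (the greatest subset of `F` closed under
the controllable-predecessor property) of the total DFA `(Q, Σ, s₀, δ, F)` and
`s₀ ∉ G`, then there is no supervisor whose language is contained in the language of
the DFA: the specification "invariantly satisfy `A`" is unrealizable. -/
theorem unrealizable_of_start_not_winning {I O Q : Type} [Fintype I] [Fintype O]
    [Fintype Q] (δ : Q → Letter I O → Q) (s₀ : Q) (F G : Set Q)
    (hGF : G ⊆ F)
    (hGinv : ∀ s ∈ G, ∀ i : I → Bool, ∃ o : O → Bool, δ s (i, o) ∈ G)
    (hGmax : ∀ X ⊆ F, (∀ s ∈ X, ∀ i : I → Bool, ∃ o : O → Bool, δ s (i, o) ∈ X) →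
      X ⊆ G)
    (hs₀ : s₀ ∉ G) :
    ¬ ∃ (Q' : Type) (_ : Fintype Q') (S : Mealy I O Q'),
        S.NonBlocking ∧ S.lang ⊆ {w : List (Letter I O) | w.foldl δ s₀ ∈ F} := by
  rintro ⟨Q', _, S, hNB, hsub⟩
  set X : Set Q := {s | ∃ w : List (Letter I O),
    S.evalFrom S.start w ≠ S.reject ∧ w.foldl δ s₀ = s} with hX
  have hXF : X ⊆ F := by
    rintro s ⟨w, hw, rfl⟩
    exact hsub hw
  have hXinv : ∀ s ∈ X, ∀ i : I → Bool, ∃ o : O → Bool, δ s (i, o) ∈ X := by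
    rintro s ⟨w, hw, rfl⟩ i
    obtain ⟨o, ho⟩ := hNB _ hw i
    refine ⟨o, w ++ [(i, o)], ?_, ?_⟩
    · simpa [Mealy.evalFrom, List.foldl_append] using ho
    · simp [List.foldl_append]
  exact hs₀ (hGmax X hXF hXinv ⟨[], S.start_ne_reject, rfl⟩)
end

section
/- Let L_h ⊆ Σ^* (hard requirement) and C ⊆ Σ^* (soft requirement) be regular languages over Σ = 2^I × 2^O, and let H ∈ ℕ. If there exists at least one supervisor S0 with L(S0) ⊆ L_h, then there exists a controller Cnt with L(Cnt) ⊆ L_h such that for every supervisor S with L(S) ⊆ L_h, ValAvgMin_H(S, C) ≤ ValAvgMin_H(Cnt, C); i.e., the synthesized controller invariantly satisfies the hard requirement and is H-optimal for the soft requirement among all supervisors satisfying the hard requirement. -/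
open Classical in
/-- `Value_C(σ)`: the number of positions `j < |σ|` such that the prefix of `σ` of
length `j + 1` belongs to `C`. -/
noncomputable def valueC {A : Type} (C : Set (List A)) (σ : List A) : ℕ :=
  ((Finset.range σ.length).filter (fun j => σ.take (j + 1) ∈ C)).card

/-- `max { Value_C(ii, oo) : oo ∈ S[ii] }` for an input sequence `ii` of length `H`. -/
noncomputable def Mealy.VMaxC {I O Q : Type} (S : Mealy I O Q)
    (C : Set (List (Letter I O))) {H : ℕ} (ii : Fin H → (I → Bool)) : ℕ :=
  sSup {v : ℕ | ∃ oo : Fin H → (O → Bool),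
    (List.ofFn ii).zip (List.ofFn oo) ∈ S.lang ∧
    v = valueC C ((List.ofFn ii).zip (List.ofFn oo))}

/-- `min { Value_C(ii, oo) : oo ∈ S[ii] }` for an input sequence `ii` of length `H`. -/
noncomputable def Mealy.VMinC {I O Q : Type} (S : Mealy I O Q)
    (C : Set (List (Letter I O))) {H : ℕ} (ii : Fin H → (I → Bool)) : ℕ :=
  sInf {v : ℕ | ∃ oo : Fin H → (O → Bool),
    (List.ofFn ii).zip (List.ofFn oo) ∈ S.lang ∧
    v = valueC C ((List.ofFn ii).zip (List.ofFn oo))}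

/-- `ValAvgMax_H(S, C) = 2^{-|I|·H} Σ_{ii ∈ (2^I)^H} max { Value_C(ii,oo) : oo ∈ S[ii] }`. -/
noncomputable def Mealy.ValAvgMaxC {I O Q : Type} [Fintype I] [DecidableEq I]
    [Fintype O] [DecidableEq O] (S : Mealy I O Q) (C : Set (List (Letter I O)))
    (H : ℕ) : ℝ :=
  (∑ ii : Fin H → (I → Bool), (S.VMaxC C ii : ℝ)) / 2 ^ (Fintype.card I * H)

/-- `ValAvgMin_H(S, C) = 2^{-|I|·H} Σ_{ii ∈ (2^I)^H} min { Value_C(ii,oo) : oo ∈ S[ii] }`. -/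
noncomputable def Mealy.ValAvgMinC {I O Q : Type} [Fintype I] [DecidableEq I]
    [Fintype O] [DecidableEq O] (S : Mealy I O Q) (C : Set (List (Letter I O)))
    (H : ℕ) : ℝ :=
  (∑ ii : Fin H → (I → Bool), (S.VMinC C ii : ℝ)) / 2 ^ (Fintype.card I * H)

namespace OptCtrl

variable {I O Q : Type}

noncomputable def wordOf (f : List (I → Bool) → (O → Bool)) (l : List (I → Bool)) :
    List (Letter I O) :=
  List.ofFn (fun j : Fin l.length => (l.get j, f (l.take (j.1 + 1))))

@[simp] lemma wordOf_length (f : List (I → Bool) → (O → Bool)) (l : List (I → Bool)) :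
    (wordOf (O := O) f l).length = l.length := by simp [wordOf]

@[simp] lemma wordOf_nil (f : List (I → Bool) → (O → Bool)) :
    wordOf (O := O) f [] = [] := by simp [wordOf]

lemma wordOf_getElem (f : List (I → Bool) → (O → Bool)) (l : List (I → Bool))
    (j : ℕ) (hj : j < (wordOf (O := O) f l).length) :
    (wordOf (O := O) f l)[j] = (l[j]'(by simpa using hj), f (l.take (j + 1))) := by
  simp [wordOf]

lemma wordOf_concat (f : List (I → Bool) → (O → Bool)) (l : List (I → Bool))
    (i : I → Bool) :
    wordOf (O := O) f (l ++ [i]) = wordOf (O := O) f l ++ [(i, f (l ++ [i]))] := by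
  apply List.ext_getElem
  · simp
  · intro j h1 h2
    rw [wordOf_getElem]
    rcases lt_or_eq_of_le (Nat.lt_succ_iff.mp (by simpa using h1)) with hj | hj
    · rw [List.getElem_append_left (by simpa using hj),
        List.take_append_of_le_length (by omega),
        List.getElem_append_left (by simpa using hj), wordOf_getElem]
    · subst hj
      rw [List.getElem_append_right (by simp)]
      rw [List.take_of_length_le (by simp)]
      rw [List.getElem_append_right (by simp)]
      simp

lemma wordOf_map_fst (f : List (I → Bool) → (O → Bool)) (l : List (I → Bool)) :
    (wordOf (O := O) f l).map Prod.fst = l := by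
  apply List.ext_getElem
  · simp
  · intro j h1 h2
    simp [wordOf]

lemma zip_ofFn {α β : Type*} {n : ℕ} (f : Fin n → α) (g : Fin n → β) :
    (List.ofFn f).zip (List.ofFn g) = List.ofFn (fun j => (f j, g j)) := by
  apply List.ext_getElem
  · simp
  · intro j h1 h2
    simp [List.getElem_zip]

lemma wordOf_ofFn (f : List (I → Bool) → (O → Bool)) {H : ℕ} (ii : Fin H → (I → Bool)) :
    wordOf (O := O) f (List.ofFn ii) =
      (List.ofFn ii).zip (List.ofFn fun j : Fin H => f ((List.ofFn ii).take (j.1 + 1))) := by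
  rw [zip_ofFn]
  apply List.ext_getElem
  · simp
  · intro j h1 h2
    rw [wordOf_getElem]
    simp

@[simp] lemma evalFrom_nil (S : Mealy I O Q) (q : Q) : S.evalFrom q [] = q := rfl

lemma evalFrom_append (S : Mealy I O Q) (q : Q) (w₁ w₂ : List (Letter I O)) :
    S.evalFrom q (w₁ ++ w₂) = S.evalFrom (S.evalFrom q w₁) w₂ :=
  List.foldl_append

lemma evalFrom_cons (S : Mealy I O Q) (q : Q) (a : Letter I O) (w : List (Letter I O)) :
    S.evalFrom q (a :: w) = S.evalFrom (S.step q a) w := rfl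

lemma evalFrom_singleton (S : Mealy I O Q) (q : Q) (a : Letter I O) :
    S.evalFrom q [a] = S.step q a := rfl

lemma evalFrom_reject (S : Mealy I O Q) (w : List (Letter I O)) :
    S.evalFrom S.reject w = S.reject := by
  induction w with
  | nil => rfl
  | cons a w ih => rw [evalFrom_cons, S.reject_sink]; exact ih

open Classical in
/-- Choose an output keeping a non-blocking machine alive. -/
noncomputable def pickO (S : Mealy I O Q) (hNB : S.NonBlocking) (q : Q) (i : I → Bool) :
    O → Bool :=
  if h : q ≠ S.reject then (hNB q h i).choose else fun _ => false

lemma pickO_spec (S : Mealy I O Q) (hNB : S.NonBlocking) {q : Q} (hq : q ≠ S.reject)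
    (i : I → Bool) : S.step q (i, pickO S hNB q i) ≠ S.reject := by
  classical
  rw [pickO]
  rw [dif_pos hq]
  exact (hNB q hq i).choose_spec

/-- The run of the canonical deterministic sub-strategy of `S` from `q` on inputs `l`. -/
noncomputable def go (S : Mealy I O Q) (hNB : S.NonBlocking) : Q → List (I → Bool) →
    List (Letter I O)
  | _, [] => []
  | q, i :: l => (i, pickO S hNB q i) :: go S hNB (S.step q (i, pickO S hNB q i)) l

@[simp] lemma go_nil (S : Mealy I O Q) (hNB : S.NonBlocking) (q : Q) :
    go S hNB q [] = [] := rfl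

lemma go_cons (S : Mealy I O Q) (hNB : S.NonBlocking) (q : Q) (i : I → Bool)
    (l : List (I → Bool)) :
    go S hNB q (i :: l) =
      (i, pickO S hNB q i) :: go S hNB (S.step q (i, pickO S hNB q i)) l := rfl

@[simp] lemma go_length (S : Mealy I O Q) (hNB : S.NonBlocking) (q : Q)
    (l : List (I → Bool)) : (go S hNB q l).length = l.length := by
  induction l generalizing q with
  | nil => rfl
  | cons i l ih => rw [go_cons]; simp [ih]

lemma go_map_fst (S : Mealy I O Q) (hNB : S.NonBlocking) (q : Q) (l : List (I → Bool)) :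
    (go S hNB q l).map Prod.fst = l := by
  induction l generalizing q with
  | nil => rfl
  | cons i l ih => rw [go_cons]; simp [ih]

lemma go_ne_reject (S : Mealy I O Q) (hNB : S.NonBlocking) {q : Q} (hq : q ≠ S.reject)
    (l : List (I → Bool)) : S.evalFrom q (go S hNB q l) ≠ S.reject := by
  induction l generalizing q with
  | nil => simpa using hq
  | cons i l ih =>
    rw [go_cons, evalFrom_cons]
    exact ih (pickO_spec S hNB hq i)

lemma go_append (S : Mealy I O Q) (hNB : S.NonBlocking) (q : Q)
    (l₁ l₂ : List (I → Bool)) :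
    go S hNB q (l₁ ++ l₂) = go S hNB q l₁ ++ go S hNB (S.evalFrom q (go S hNB q l₁)) l₂ := by
  induction l₁ generalizing q with
  | nil => simp
  | cons i l ih =>
    rw [List.cons_append, go_cons, go_cons, ih, evalFrom_cons, List.cons_append]

lemma go_take (S : Mealy I O Q) (hNB : S.NonBlocking) (q : Q) (l : List (I → Bool))
    (n : ℕ) (hn : n ≤ l.length) :
    (go S hNB q l).take n = go S hNB q (l.take n) := by
  conv_lhs => rw [← List.take_append_drop n l]
  rw [go_append]
  exact List.take_left' (by simp [hn])

/-- The strategy extracted from a non-blocking supervisor. -/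
noncomputable def stratOf (S : Mealy I O Q) (hNB : S.NonBlocking)
    (l : List (I → Bool)) : O → Bool :=
  ((go S hNB S.start l).getLast?.getD ((fun _ => false), fun _ => false)).2

lemma wordOf_stratOf (S : Mealy I O Q) (hNB : S.NonBlocking) (l : List (I → Bool)) :
    wordOf (stratOf S hNB) l = go S hNB S.start l := by
  apply List.ext_getElem
  · simp [wordOf]
  · intro j h1 h2
    have hjl : j < l.length := by simpa [wordOf] using h1
    have hfst : (go S hNB S.start l)[j].1 = l[j] := by
      have := go_map_fst S hNB S.start l
      calc (go S hNB S.start l)[j].1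
          = ((go S hNB S.start l).map Prod.fst)[j]'(by simpa using hjl) := by simp
        _ = l[j] := by simp [this]
    have hsnd : stratOf S hNB (l.take (j + 1)) = (go S hNB S.start l)[j].2 := by
      rw [stratOf, ← go_take S hNB S.start l (j + 1) (by omega)]
      rw [List.getLast?_eq_getElem?]
      have hlen : ((go S hNB S.start l).take (j + 1)).length = j + 1 := by
        simp; omega
      rw [hlen]
      simp only [Nat.add_sub_cancel]
      rw [List.getElem?_take, if_pos (by omega)]
      rw [List.getElem?_eq_getElem (by simpa using hjl)]
      rfl
    have hget : (wordOf (stratOf S hNB) l)[j] = (l[j]'hjl, stratOf S hNB (l.take (j+1))) := by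
      simp [wordOf]
    rw [hget]
    exact Prod.ext hfst.symm hsnd



/-! ### Determinized post-horizon step -/

open Classical in
/-- Restrict `S'` to the canonical picked output. -/
noncomputable def detStep (S' : Mealy I O Q) (hNB' : S'.NonBlocking) (q : Q)
    (a : Letter I O) : Q :=
  if q ≠ S'.reject ∧ a.2 = pickO S' hNB' q a.1 then S'.step q a else S'.reject

lemma detStep_reject (S' : Mealy I O Q) (hNB' : S'.NonBlocking) (a : Letter I O) :
    detStep S' hNB' S'.reject a = S'.reject := by
  classical
  rw [detStep, if_neg]; tauto

lemma detStep_of_ne (S' : Mealy I O Q) (hNB' : S'.NonBlocking) {q : Q} {a : Letter I O}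
    (h : detStep S' hNB' q a ≠ S'.reject) :
    detStep S' hNB' q a = S'.step q a ∧ a.2 = pickO S' hNB' q a.1 ∧ q ≠ S'.reject := by
  classical
  by_cases hc : q ≠ S'.reject ∧ a.2 = pickO S' hNB' q a.1
  · rw [detStep, if_pos hc]; exact ⟨rfl, hc.2, hc.1⟩
  · exact absurd (by rw [detStep, if_neg hc]) h

lemma detStep_pick (S' : Mealy I O Q) (hNB' : S'.NonBlocking) {q : Q}
    (hq : q ≠ S'.reject) (i : I → Bool) :
    detStep S' hNB' q (i, pickO S' hNB' q i) ≠ S'.reject := by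
  classical
  rw [detStep, if_pos ⟨hq, rfl⟩]
  exact pickO_spec S' hNB' hq i

lemma detRun_reject (S' : Mealy I O Q) (hNB' : S'.NonBlocking)
    (w : List (Letter I O)) :
    w.foldl (detStep S' hNB') S'.reject = S'.reject := by
  induction w with
  | nil => rfl
  | cons a w ih => rw [List.foldl_cons, detStep_reject]; exact ih

lemma detRun_eq (S' : Mealy I O Q) (hNB' : S'.NonBlocking) (w : List (Letter I O))
    (q : Q) (h : w.foldl (detStep S' hNB') q ≠ S'.reject) :
    w.foldl (detStep S' hNB') q = S'.evalFrom q w := by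
  induction w generalizing q with
  | nil => rfl
  | cons a w ih =>
    rw [List.foldl_cons] at h ⊢
    have hne : detStep S' hNB' q a ≠ S'.reject := by
      intro hc
      rw [hc, detRun_reject] at h
      exact h rfl
    rw [ih _ h, (detStep_of_ne S' hNB' hne).1, evalFrom_cons]

/-! ### Padded histories -/

/-- Pad an input list to a function on `Fin H`. -/
def padL (H : ℕ) (l : List (I → Bool)) : Fin H → (I → Bool) :=
  fun j => l.getD j (fun _ => false)

@[simp] lemma padL_nil (H : ℕ) : padL (I := I) H [] = fun _ => fun _ => false := by
  funext j; simp [padL]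

lemma padL_concat {H : ℕ} {l : List (I → Bool)} (hl : l.length < H) (i : I → Bool) :
    Function.update (padL H l) ⟨l.length, hl⟩ i = padL H (l ++ [i]) := by
  funext j
  by_cases hj : j = ⟨l.length, hl⟩
  · subst hj
    rw [Function.update_self]
    simp [padL, List.getD]
  · rw [Function.update_of_ne hj]
    have hj' : (j : ℕ) ≠ l.length := by
      intro hc; exact hj (Fin.ext hc)
    rcases lt_or_gt_of_ne hj' with h | h
    · simp [padL, List.getD, List.getElem?_append_left h]
    · simp only [padL, List.getD]
      rw [List.getElem?_eq_none (by omega), List.getElem?_eq_none (by simp; omega)]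

lemma ofFn_padL_take {H : ℕ} {l : List (I → Bool)} (hl : l.length ≤ H) :
    (List.ofFn (padL H l)).take l.length = l := by
  apply List.ext_getElem
  · simp; omega
  · intro j h1 h2
    rw [List.getElem_take]
    rw [List.getElem_ofFn]
    simp only [padL]
    rw [List.getD_eq_getElem _ _ (by simpa using h2)]

lemma ofFn_padL_full {H : ℕ} {l : List (I → Bool)} (hl : l.length = H) :
    List.ofFn (padL H l) = l := by
  have := ofFn_padL_take (l := l) (H := H) (le_of_eq hl)
  rwa [hl, List.take_of_length_le (by simp)] at this


/-! ### The synthesized controller -/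

variable {Q' : Type}

open Classical in
/-- The controller following strategy `f` for `H` steps, then the canonical
deterministic sub-supervisor of `S'`. -/
noncomputable def ctrl (H : ℕ) (S' : Mealy I O Q') (hNB' : S'.NonBlocking)
    (f : List (I → Bool) → (O → Bool)) :
    Mealy I O ((Fin (H + 1) × (Fin H → (I → Bool))) ⊕ Q') where
  step x a :=
    match x with
    | Sum.inr q => Sum.inr (detStep S' hNB' q a)
    | Sum.inl (t, h) =>
      if ht : (t : ℕ) < H then
        if a.2 = f ((List.ofFn (Function.update h ⟨t, ht⟩ a.1)).take ((t : ℕ) + 1)) then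
          Sum.inl (⟨(t : ℕ) + 1, by omega⟩, Function.update h ⟨t, ht⟩ a.1)
        else Sum.inr S'.reject
      else Sum.inr (detStep S' hNB' (S'.evalFrom S'.start (wordOf f (List.ofFn h))) a)
  start := Sum.inl (⟨0, by omega⟩, fun _ => fun _ => false)
  reject := Sum.inr S'.reject
  start_ne_reject := by simp
  reject_sink := fun a => congrArg Sum.inr (detStep_reject S' hNB' a)

@[simp] lemma ctrl_step_inr (H : ℕ) (S' : Mealy I O Q') (hNB' : S'.NonBlocking)
    (f : List (I → Bool) → (O → Bool)) (q : Q') (a : Letter I O) :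
    (ctrl H S' hNB' f).step (Sum.inr q) a = Sum.inr (detStep S' hNB' q a) := rfl

open Classical in
lemma ctrl_step_inl (H : ℕ) (S' : Mealy I O Q') (hNB' : S'.NonBlocking)
    (f : List (I → Bool) → (O → Bool)) (t : Fin (H + 1)) (h : Fin H → (I → Bool))
    (a : Letter I O) :
    (ctrl H S' hNB' f).step (Sum.inl (t, h)) a =
      if ht : (t : ℕ) < H then
        if a.2 = f ((List.ofFn (Function.update h ⟨t, ht⟩ a.1)).take ((t : ℕ) + 1)) then
          Sum.inl (⟨(t : ℕ) + 1, by omega⟩, Function.update h ⟨t, ht⟩ a.1)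
        else Sum.inr S'.reject
      else Sum.inr (detStep S' hNB' (S'.evalFrom S'.start (wordOf f (List.ofFn h))) a) := rfl

@[simp] lemma ctrl_start (H : ℕ) (S' : Mealy I O Q') (hNB' : S'.NonBlocking)
    (f : List (I → Bool) → (O → Bool)) :
    (ctrl H S' hNB' f).start = Sum.inl (⟨0, by omega⟩, fun _ => fun _ => false) := rfl

@[simp] lemma ctrl_reject (H : ℕ) (S' : Mealy I O Q') (hNB' : S'.NonBlocking)
    (f : List (I → Bool) → (O → Bool)) :
    (ctrl H S' hNB' f).reject = Sum.inr S'.reject := rfl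

lemma ctrl_eval_wordOf (H : ℕ) (S' : Mealy I O Q') (hNB' : S'.NonBlocking)
    (f : List (I → Bool) → (O → Bool)) (l : List (I → Bool)) (hl : l.length ≤ H) :
    (ctrl H S' hNB' f).evalFrom (ctrl H S' hNB' f).start (wordOf f l) =
      Sum.inl (⟨l.length, by omega⟩, padL H l) := by
  classical
  induction l using List.reverseRecOn with
  | nil => simp
  | append_singleton l i ih =>
    have hl' : l.length < H := by simpa using hl
    rw [wordOf_concat, evalFrom_append, ih (le_of_lt hl')]
    show (ctrl H S' hNB' f).step _ _ = _
    rw [ctrl_step_inl, dif_pos hl']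
    rw [show Function.update (padL H l) ⟨l.length, hl'⟩ i = padL H (l ++ [i]) from
      padL_concat hl' i]
    rw [show ((List.ofFn (padL H (l ++ [i]))).take (l.length + 1)) = l ++ [i] by
      have := ofFn_padL_take (l := l ++ [i]) (H := H) (by simp; omega)
      simpa using this]
    rw [if_pos rfl]
    simp

lemma ctrl_inv (H : ℕ) (S' : Mealy I O Q') (hNB' : S'.NonBlocking)
    (f : List (I → Bool) → (O → Bool)) (hsafe : ∀ l, wordOf f l ∈ S'.lang)
    (w : List (Letter I O))
    (hw : (ctrl H S' hNB' f).evalFrom (ctrl H S' hNB' f).start w ≠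
      (ctrl H S' hNB' f).reject) :
    S'.evalFrom S'.start w ≠ S'.reject ∧
    (∀ hle : w.length ≤ H, w = wordOf f (w.map Prod.fst) ∧
      (ctrl H S' hNB' f).evalFrom (ctrl H S' hNB' f).start w =
        Sum.inl (⟨w.length, by omega⟩, padL H (w.map Prod.fst))) ∧
    (H < w.length → (ctrl H S' hNB' f).evalFrom (ctrl H S' hNB' f).start w =
      Sum.inr (S'.evalFrom S'.start w)) := by
  classical
  induction w using List.reverseRecOn with
  | nil =>
    refine ⟨by simpa using S'.start_ne_reject, fun _ => ⟨by simp, by simp⟩, by simp⟩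
  | append_singleton w a ih =>
    have hw0 : (ctrl H S' hNB' f).evalFrom (ctrl H S' hNB' f).start w ≠
        (ctrl H S' hNB' f).reject := by
      intro hc
      apply hw
      rw [evalFrom_append, hc]
      exact congrArg Sum.inr (detStep_reject S' hNB' a)
    obtain ⟨h1, h2, h3⟩ := ih hw0
    rcases lt_trichotomy w.length H with hlt | heq | hgt
    · obtain ⟨hww, heval⟩ := h2 (le_of_lt hlt)
      have hfst : (w.map Prod.fst).length = w.length := by simp
      have hstep : (ctrl H S' hNB' f).evalFrom (ctrl H S' hNB' f).start (w ++ [a]) =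
          (ctrl H S' hNB' f).step
            (Sum.inl (⟨w.length, by omega⟩, padL H (w.map Prod.fst))) a := by
        rw [evalFrom_append, heval]; rfl
      have hlt' : ((⟨w.length, by omega⟩ : Fin (H + 1)) : ℕ) < H := hlt
      have hupd : Function.update (padL H (w.map Prod.fst))
          ⟨(⟨w.length, by omega⟩ : Fin (H+1)), hlt'⟩ a.1 = padL H (w.map Prod.fst ++ [a.1]) := by
        have := padL_concat (l := w.map Prod.fst) (H := H) (by simpa using hlt) a.1
        convert this using 2
        exact Fin.ext (by simp)
      have htake : ((List.ofFn (padL H (w.map Prod.fst ++ [a.1]))).take (w.length + 1)) =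
          w.map Prod.fst ++ [a.1] := by
        have := ofFn_padL_take (l := w.map Prod.fst ++ [a.1]) (H := H) (by simp; omega)
        simpa using this
      rw [ctrl_step_inl, dif_pos hlt', hupd, htake] at hstep
      have ha2 : a.2 = f (w.map Prod.fst ++ [a.1]) := by
        by_contra hne
        rw [if_neg hne] at hstep
        exact hw (by rw [hstep]; rfl)
      rw [if_pos ha2] at hstep
      have hword : w ++ [a] = wordOf f (w.map Prod.fst ++ [a.1]) := by
        rw [wordOf_concat, ← hww, ← ha2]
      refine ⟨?_, fun hle => ⟨?_, ?_⟩, fun hgt' => absurd hgt' (by simp; omega)⟩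
      · rw [hword]; exact hsafe _
      · rw [show (w ++ [a]).map Prod.fst = w.map Prod.fst ++ [a.1] by simp]
        exact hword
      · rw [hstep]
        congr 1
        refine Prod.ext (Fin.ext (by simp)) ?_
        simp
    · obtain ⟨hww, heval⟩ := h2 (le_of_eq heq)
      have hfull : List.ofFn (padL H (w.map Prod.fst)) = w.map Prod.fst :=
        ofFn_padL_full (by simpa using heq)
      have hstep : (ctrl H S' hNB' f).evalFrom (ctrl H S' hNB' f).start (w ++ [a]) =
          Sum.inr (detStep S' hNB' (S'.evalFrom S'.start w) a) := by
        rw [evalFrom_append, heval]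
        show (ctrl H S' hNB' f).step _ _ = _
        rw [ctrl_step_inl, dif_neg (by simp [heq]), hfull, ← hww]
      have hne : detStep S' hNB' (S'.evalFrom S'.start w) a ≠ S'.reject := by
        intro hc
        exact hw (by rw [hstep, hc]; rfl)
      have hdet := (detStep_of_ne S' hNB' hne).1
      have heval' : S'.evalFrom S'.start (w ++ [a]) =
          detStep S' hNB' (S'.evalFrom S'.start w) a := by
        rw [evalFrom_append, evalFrom_singleton, hdet]
      refine ⟨by rw [heval']; exact hne, fun hle => absurd hle (by simp; omega),
        fun _ => ?_⟩
      rw [hstep, heval']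
    · have heval := h3 hgt
      have hstep : (ctrl H S' hNB' f).evalFrom (ctrl H S' hNB' f).start (w ++ [a]) =
          Sum.inr (detStep S' hNB' (S'.evalFrom S'.start w) a) := by
        rw [evalFrom_append, heval]; rfl
      have hne : detStep S' hNB' (S'.evalFrom S'.start w) a ≠ S'.reject := by
        intro hc
        exact hw (by rw [hstep, hc]; rfl)
      have hdet := (detStep_of_ne S' hNB' hne).1
      have heval' : S'.evalFrom S'.start (w ++ [a]) =
          detStep S' hNB' (S'.evalFrom S'.start w) a := by
        rw [evalFrom_append, evalFrom_singleton, hdet]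
      refine ⟨by rw [heval']; exact hne, fun hle => absurd hle (by simp; omega),
        fun _ => ?_⟩
      rw [hstep, heval']


lemma ctrl_nonblocking (H : ℕ) (S' : Mealy I O Q') (hNB' : S'.NonBlocking)
    (f : List (I → Bool) → (O → Bool)) (hsafe : ∀ l, wordOf f l ∈ S'.lang) :
    (ctrl H S' hNB' f).NonBlocking := by
  rintro (⟨t, h⟩ | q) hq i
  · by_cases ht : (t : ℕ) < H
    · refine ⟨f ((List.ofFn (Function.update h ⟨t, ht⟩ i)).take ((t : ℕ) + 1)), ?_⟩
      rw [ctrl_step_inl, dif_pos ht, if_pos rfl]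
      simp
    · have hq' : S'.evalFrom S'.start (wordOf f (List.ofFn h)) ≠ S'.reject := hsafe _
      refine ⟨pickO S' hNB' (S'.evalFrom S'.start (wordOf f (List.ofFn h))) i, ?_⟩
      rw [ctrl_step_inl, dif_neg ht]
      simp only [ctrl_reject, ne_eq, Sum.inr.injEq]
      exact detStep_pick S' hNB' hq' i
  · have hq' : q ≠ S'.reject := fun hc => hq (by rw [hc]; rfl)
    refine ⟨pickO S' hNB' q i, ?_⟩
    rw [ctrl_step_inr]
    simp only [ctrl_reject, ne_eq, Sum.inr.injEq]
    exact detStep_pick S' hNB' hq' i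

lemma ctrl_deterministic (H : ℕ) (S' : Mealy I O Q') (hNB' : S'.NonBlocking)
    (f : List (I → Bool) → (O → Bool)) :
    (ctrl H S' hNB' f).Deterministic := by
  classical
  rintro (⟨t, h⟩ | q) hq i o₁ o₂ h₁ h₂
  · by_cases ht : (t : ℕ) < H
    · have key : ∀ o : O → Bool, (ctrl H S' hNB' f).step (Sum.inl (t, h)) (i, o) ≠
          (ctrl H S' hNB' f).reject →
          o = f ((List.ofFn (Function.update h ⟨t, ht⟩ i)).take ((t : ℕ) + 1)) := by
        intro o ho
        by_contra hne
        rw [ctrl_step_inl, dif_pos ht, if_neg hne] at ho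
        exact ho rfl
      rw [key o₁ h₁, key o₂ h₂]
    · have key : ∀ o : O → Bool, (ctrl H S' hNB' f).step (Sum.inl (t, h)) (i, o) ≠
          (ctrl H S' hNB' f).reject →
          o = pickO S' hNB' (S'.evalFrom S'.start (wordOf f (List.ofFn h))) i := by
        intro o ho
        rw [ctrl_step_inl, dif_neg ht] at ho
        have : detStep S' hNB' (S'.evalFrom S'.start (wordOf f (List.ofFn h))) (i, o) ≠
            S'.reject := fun hc => ho (by rw [hc]; rfl)
        exact (detStep_of_ne S' hNB' this).2.1
      rw [key o₁ h₁, key o₂ h₂]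
  · have key : ∀ o : O → Bool, (ctrl H S' hNB' f).step (Sum.inr q) (i, o) ≠
        (ctrl H S' hNB' f).reject → o = pickO S' hNB' q i := by
      intro o ho
      rw [ctrl_step_inr] at ho
      have : detStep S' hNB' q (i, o) ≠ S'.reject := fun hc => ho (by rw [hc]; rfl)
      exact (detStep_of_ne S' hNB' this).2.1
    rw [key o₁ h₁, key o₂ h₂]

lemma ctrl_lang_subset (H : ℕ) (S' : Mealy I O Q') (hNB' : S'.NonBlocking)
    (f : List (I → Bool) → (O → Bool)) (hsafe : ∀ l, wordOf f l ∈ S'.lang) :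
    (ctrl H S' hNB' f).lang ⊆ S'.lang :=
  fun w hw => (ctrl_inv H S' hNB' f hsafe w hw).1

end OptCtrl

namespace OptCtrl

variable {I O Q : Type}

lemma valueC_le_length (C : Set (List (Letter I O))) (σ : List (Letter I O)) :
    valueC C σ ≤ σ.length := by
  classical
  unfold valueC
  exact le_trans (Finset.card_filter_le _ _) (by simp)

/-- The value set defining `VMinC`. -/
lemma vminC_mem_le (S : Mealy I O Q) (C : Set (List (Letter I O))) {H : ℕ}
    (ii : Fin H → (I → Bool)) {v : ℕ}
    (hv : v ∈ {v : ℕ | ∃ oo : Fin H → (O → Bool),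
      (List.ofFn ii).zip (List.ofFn oo) ∈ S.lang ∧
      v = valueC C ((List.ofFn ii).zip (List.ofFn oo))}) :
    S.VMinC C ii ≤ v :=
  Nat.sInf_le hv

/-- The supervisor's min-value is at most the value of its extracted strategy. -/
lemma vminC_le_stratOf (S : Mealy I O Q) (hNB : S.NonBlocking)
    (C : Set (List (Letter I O))) {H : ℕ} (ii : Fin H → (I → Bool)) :
    S.VMinC C ii ≤ valueC C (wordOf (stratOf S hNB) (List.ofFn ii)) := by
  apply vminC_mem_le
  refine ⟨fun j : Fin H => stratOf S hNB ((List.ofFn ii).take (j.1 + 1)), ?_, ?_⟩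
  · rw [← wordOf_ofFn, wordOf_stratOf]
    exact go_ne_reject S hNB S.start_ne_reject _
  · rw [← wordOf_ofFn]

variable {Q' : Type}

/-- The controller's min-value equals the value of `f`'s word. -/
lemma ctrl_vminC (H : ℕ) (S' : Mealy I O Q') (hNB' : S'.NonBlocking)
    (f : List (I → Bool) → (O → Bool)) (hsafe : ∀ l, wordOf f l ∈ S'.lang)
    (C : Set (List (Letter I O))) (ii : Fin H → (I → Bool)) :
    (ctrl H S' hNB' f).VMinC C ii = valueC C (wordOf f (List.ofFn ii)) := by
  have hmem : valueC C (wordOf f (List.ofFn ii)) ∈ {v : ℕ | ∃ oo : Fin H → (O → Bool),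
      (List.ofFn ii).zip (List.ofFn oo) ∈ (ctrl H S' hNB' f).lang ∧
      v = valueC C ((List.ofFn ii).zip (List.ofFn oo))} := by
    refine ⟨fun j : Fin H => f ((List.ofFn ii).take (j.1 + 1)), ?_, ?_⟩
    · rw [← wordOf_ofFn]
      show (ctrl H S' hNB' f).evalFrom _ _ ≠ _
      rw [ctrl_eval_wordOf H S' hNB' f (List.ofFn ii) (by simp)]
      simp
    · rw [← wordOf_ofFn]
  have hall : ∀ v ∈ {v : ℕ | ∃ oo : Fin H → (O → Bool),
      (List.ofFn ii).zip (List.ofFn oo) ∈ (ctrl H S' hNB' f).lang ∧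
      v = valueC C ((List.ofFn ii).zip (List.ofFn oo))},
      v = valueC C (wordOf f (List.ofFn ii)) := by
    rintro v ⟨oo, hlang, rfl⟩
    set z := (List.ofFn ii).zip (List.ofFn oo) with hz
    have hzlen : z.length = H := by simp [hz]
    obtain ⟨hzw, -⟩ := (ctrl_inv H S' hNB' f hsafe z hlang).2.1 (le_of_eq hzlen)
    have hfst : z.map Prod.fst = List.ofFn ii := by
      rw [hz, List.map_fst_zip (by simp)]
    rw [hfst] at hzw
    rw [hzw]
  exact le_antisymm (Nat.sInf_le hmem)
    (le_csInf ⟨_, hmem⟩ fun b hb => (hall b hb).ge)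

/-- A strategy is safe (w.r.t. the hard requirement `Lh`) if it is covered by some
finite-state supervisor satisfying `Lh`. -/
def SafeStrat (Lh : Language (Letter I O)) (f : List (I → Bool) → (O → Bool)) : Prop :=
  ∃ (Q' : Type) (_ : Fintype Q') (S' : Mealy I O Q'),
    S'.NonBlocking ∧ S'.lang ⊆ Lh ∧ ∀ l, wordOf f l ∈ S'.lang

lemma safeStrat_stratOf (Lh : Language (Letter I O)) (S : Mealy I O Q) [Fintype Q]
    (hNB : S.NonBlocking) (hsub : S.lang ⊆ Lh) : SafeStrat Lh (stratOf S hNB) :=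
  ⟨Q, inferInstance, S, hNB, hsub, fun l => by
    show S.evalFrom _ _ ≠ _
    rw [wordOf_stratOf]
    exact go_ne_reject S hNB S.start_ne_reject l⟩

end OptCtrl

/-- given regular hard and soft requirements `Lh` and `C` and a horizon
`H`, if some supervisor invariantly satisfies the hard requirement (`L(S₀) ⊆ Lh`),
then there is a controller `Cnt` with `L(Cnt) ⊆ Lh` that is `H`-optimal for the soft
requirement among all supervisors satisfying the hard requirement:
`ValAvgMin_H(S, C) ≤ ValAvgMin_H(Cnt, C)` for every such supervisor `S`. -/
theorem exists_H_optimal_controller {I O : Type} [Fintype I] [DecidableEq I]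
    [Fintype O] [DecidableEq O]
    (Lh C : Language (Letter I O)) (hLh : Lh.IsRegular) (hC : C.IsRegular) (H : ℕ)
    (hreal : ∃ (Q₀ : Type) (_ : Fintype Q₀) (S₀ : Mealy I O Q₀),
      S₀.NonBlocking ∧ S₀.lang ⊆ Lh) :
    ∃ (Q : Type) (_ : Fintype Q) (Cnt : Mealy I O Q),
      Cnt.NonBlocking ∧ Cnt.Deterministic ∧ Cnt.lang ⊆ Lh ∧
      ∀ (Q' : Type) [Fintype Q'] (S : Mealy I O Q'), S.NonBlocking → S.lang ⊆ Lh →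
        S.ValAvgMinC C H ≤ Cnt.ValAvgMinC C H := by
  classical
  obtain ⟨Q₀, instQ₀, S₀, hNB₀, hsub₀⟩ := hreal
  set V : Set ℕ := {n | ∃ f, OptCtrl.SafeStrat Lh f ∧
    n = ∑ ii : Fin H → (I → Bool), valueC C (OptCtrl.wordOf f (List.ofFn ii))} with hV
  have hne : V.Nonempty :=
    ⟨_, OptCtrl.stratOf S₀ hNB₀, OptCtrl.safeStrat_stratOf Lh S₀ hNB₀ hsub₀, rfl⟩
  have hbdd : BddAbove V := by
    refine ⟨(Fintype.card (Fin H → (I → Bool))) * H, ?_⟩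
    rintro n ⟨f, -, rfl⟩
    calc ∑ ii : Fin H → (I → Bool), valueC C (OptCtrl.wordOf f (List.ofFn ii))
        ≤ ∑ _ii : Fin H → (I → Bool), H := by
          refine Finset.sum_le_sum fun ii _ => ?_
          have := OptCtrl.valueC_le_length C (OptCtrl.wordOf f (List.ofFn ii))
          simpa using this
      _ = (Fintype.card (Fin H → (I → Bool))) * H := by
          simp [Finset.sum_const, Finset.card_univ, mul_comm]
  obtain ⟨f, hfsafe, hfval⟩ := Nat.sSup_mem hne hbdd
  obtain ⟨Q', instQ', S', hNB', hsub', hsafe⟩ := hfsafe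
  refine ⟨_, inferInstance, OptCtrl.ctrl H S' hNB' f,
    OptCtrl.ctrl_nonblocking H S' hNB' f hsafe,
    OptCtrl.ctrl_deterministic H S' hNB' f, ?_, ?_⟩
  · exact fun w hw => hsub' (OptCtrl.ctrl_lang_subset H S' hNB' f hsafe hw)
  · intro Q'' instQ'' S hNBS hsubS
    have hnat : (∑ ii : Fin H → (I → Bool), S.VMinC C ii) ≤
        ∑ ii : Fin H → (I → Bool), (OptCtrl.ctrl H S' hNB' f).VMinC C ii := by
      calc ∑ ii : Fin H → (I → Bool), S.VMinC C ii
          ≤ ∑ ii : Fin H → (I → Bool),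
              valueC C (OptCtrl.wordOf (OptCtrl.stratOf S hNBS) (List.ofFn ii)) :=
            Finset.sum_le_sum fun ii _ => OptCtrl.vminC_le_stratOf S hNBS C ii
        _ ≤ sSup V := le_csSup hbdd
            ⟨OptCtrl.stratOf S hNBS, OptCtrl.safeStrat_stratOf Lh S hNBS hsubS, rfl⟩
        _ = ∑ ii : Fin H → (I → Bool), valueC C (OptCtrl.wordOf f (List.ofFn ii)) :=
            hfval
        _ = ∑ ii : Fin H → (I → Bool), (OptCtrl.ctrl H S' hNB' f).VMinC C ii := by
            refine Finset.sum_congr rfl fun ii _ => ?_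
            rw [OptCtrl.ctrl_vminC H S' hNB' f hsafe C ii]
    unfold Mealy.ValAvgMinC
    have hpos : (0 : ℝ) < 2 ^ (Fintype.card I * H) := by positivity
    rw [div_le_div_iff_of_pos_right hpos]
    exact_mod_cast hnat
end

section
/- Fix n clients with inputs I = {r_1,…,r_n} and outputs O = {a_1,…,a_n}. If 1 ≤ k < n, then there is no supervisor S over (I, O) such that every word in L(S) satisfies both Mutex(n) and Response(n, k); in particular the invariance specification ArbCommit(n, k) is unrealizable when the response bound k is smaller than the number of clients n. -/
/-- `Mutex(n)`: in every letter of the word at most one acknowledgement is true. -/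
def Mutex (n : ℕ) (σ : List (Letter (Fin n) (Fin n))) : Prop :=
  ∀ l ∈ σ, ∀ i j : Fin n, l.2 i = true → l.2 j = true → i = j

/-- `Response(n, k)`: for every client `i` and every block of `k` consecutive positions
at all of which `r_i` is true, `a_i` is true at at least one of those positions. -/
def Response (n k : ℕ) (σ : List (Letter (Fin n) (Fin n))) : Prop :=
  ∀ i : Fin n, ∀ b : ℕ, b + k ≤ σ.length →
    (∀ j, b ≤ j → j < b + k → (σ.getD j default).1 i = true) →
    ∃ j, b ≤ j ∧ j < b + k ∧ (σ.getD j default).2 i = true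

/-- if `1 ≤ k < n`, then no supervisor over inputs `r₁,…,r_n` and
outputs `a₁,…,a_n` has all of its accepted words satisfying both `Mutex(n)` and
`Response(n, k)`: the invariance specification `ArbCommit(n, k)` is unrealizable when
the response bound `k` is smaller than the number of clients `n`. -/
theorem arbiter_unrealizable (n k : ℕ) (hk : 1 ≤ k) (hkn : k < n) :
    ¬ ∃ (Q : Type) (_ : Fintype Q) (S : Mealy (Fin n) (Fin n) Q),
        S.NonBlocking ∧ ∀ w ∈ S.lang, Mutex n w ∧ Response n k w := by
  rintro ⟨Q, _, S, hNB, hSpec⟩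
  -- build a word of length m with all requests true, staying out of reject
  have hbuild : ∀ m : ℕ, ∀ q : Q, q ≠ S.reject →
      ∃ w : List (Letter (Fin n) (Fin n)), w.length = m ∧
        (∀ l ∈ w, l.1 = fun _ => true) ∧ S.evalFrom q w ≠ S.reject := by
    intro m
    induction m with
    | zero => intro q hq; exact ⟨[], rfl, by simp, hq⟩
    | succ m ih =>
      intro q hq
      obtain ⟨o, ho⟩ := hNB q hq (fun _ => true)
      obtain ⟨w, hlen, hall, hne⟩ := ih (S.step q (fun _ => true, o)) ho
      refine ⟨(fun _ => true, o) :: w, by simp [hlen], ?_, hne⟩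
      intro l hl
      rcases List.mem_cons.mp hl with h | h
      · rw [h]
      · exact hall l h
  obtain ⟨w, hlen, hall, hne⟩ := hbuild k S.start S.start_ne_reject
  have hw : w ∈ S.lang := hne
  obtain ⟨hMut, hResp⟩ := hSpec w hw
  -- for each client i, some position j < k acks i
  have hack : ∀ i : Fin n, ∃ j : Fin k, (w.getD (j : ℕ) default).2 i = true := by
    intro i
    obtain ⟨j, hj0, hjk, hj⟩ := hResp i 0 (by omega)
      (by
        intro j _ hjk
        have hjlt : j < w.length := by omega
        have hmem : w.getD j default ∈ w := by
          rw [List.getD_eq_getElem _ _ hjlt]; exact List.getElem_mem hjlt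
        rw [hall _ hmem])
    exact ⟨⟨j, by omega⟩, hj⟩
  choose f hf using hack
  have hinj : Function.Injective f := by
    intro i₁ i₂ h
    have h1 := hf i₁
    have h2 := hf i₂
    rw [h] at h1
    have hjlt : ((f i₂ : ℕ)) < w.length := by rw [hlen]; exact (f i₂).2
    have hmem : w.getD (f i₂ : ℕ) default ∈ w := by
      rw [List.getD_eq_getElem _ _ hjlt]; exact List.getElem_mem hjlt
    exact hMut _ hmem i₁ i₂ h1 h2
  have := Fintype.card_le_of_injective f hinj
  simp at this
  omega
end
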